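/- arXiv:2502.11071 — 6 statements merged into one kernel-verified Lean document; each statement's English description precedes it below -/
import Mathlib

section
/- Assume the loss ℓ has values in [0,1]. Then Λ_β(h,x) ≤ β for every h ∈ H and x ∈ X^n, and for n ≥ 8 and δ > 0, with probability at least 1 − δ in x ∼ μ^n and h ∼ Ĝ_β(x), κ(L̂(h,x), L(h)) ≤ (1/n)( β + ln(2√n/δ) ). -/
open MeasureTheory Real Filter

noncomputable section

variable {H X : Type*} [MeasurableSpace H] [MeasurableSpace X]

/-- Empirical loss of hypothesis `h` on sample `x`. -/
def empLoss (ℓ : H → X → ℝ) (n : ℕ) (h : H) (x : Fin n → X) : ℝ :=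
  (∑ i, ℓ h (x i)) / n

/-- True (expected) loss of hypothesis `h`. -/
def trueLoss (ℓ : H → X → ℝ) (μ : Measure X) (h : H) : ℝ :=
  ∫ z, ℓ h z ∂μ

/-- Partition function of the Gibbs posterior. -/
def partitionZ (ℓ : H → X → ℝ) (pr : Measure H) (n : ℕ) (β : ℝ) (x : Fin n → X) : ℝ :=
  ∫ h, Real.exp (-β * empLoss ℓ n h x) ∂pr

/-- Gibbs posterior at inverse temperature `β`. -/
def gibbs (ℓ : H → X → ℝ) (pr : Measure H) (n : ℕ) (β : ℝ) (x : Fin n → X) : Measure H :=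
  pr.withDensity fun h =>
    ENNReal.ofReal (Real.exp (-β * empLoss ℓ n h x) / partitionZ ℓ pr n β x)

/-- Joint measure ρ of the sample and the Gibbs draw, on H × Xⁿ. -/
def jointRho (ℓ : H → X → ℝ) (μ : Measure X) (pr : Measure H) (n : ℕ) (β : ℝ) :
    Measure (H × (Fin n → X)) :=
  (Measure.pi fun _ : Fin n => μ).bind fun x => (gibbs ℓ pr n β x).map fun h => (h, x)

/-- Cumulative distribution function of the empirical loss under the prior. -/
def phiHat (ℓ : H → X → ℝ) (pr : Measure H) (n : ℕ) (r : ℝ) (x : Fin n → X) : ℝ :=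
  (pr {g | empLoss ℓ n g x ≤ r}).toReal

/-- Complexity measure Λ_β(h,x). -/
def Lam (ℓ : H → X → ℝ) (pr : Measure H) (n : ℕ) (β : ℝ) (h : H) (x : Fin n → X) : ℝ :=
  sInf {v : ℝ | ∃ r : ℝ, 0 < phiHat ℓ pr n (empLoss ℓ n h x + r) x ∧
    v = β * r + Real.log (1 / phiHat ℓ pr n (empLoss ℓ n h x + r) x)}

/-- Relative entropy of two Bernoulli variables. -/
def klBin (p q : ℝ) : ℝ :=
  p * Real.log (p / q) + (1 - p) * Real.log ((1 - p) / (1 - q))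


open Topology
open scoped ENNReal

section Aux


lemma klBin_symm (p q : ℝ) : klBin (1 - q) (1 - p) = klBin q p := by
  unfold klBin; rw [sub_sub_cancel, sub_sub_cancel]; ring

lemma klBin_self {p : ℝ} (hp0 : p ≠ 0) (hp1 : p ≠ 1) : klBin p p = 0 := by
  unfold klBin
  rw [div_self hp0, div_self (sub_ne_zero.mpr (Ne.symm hp1))]
  simp

lemma klBin_one (p : ℝ) : klBin 1 p = -Real.log p := by
  unfold klBin
  rw [one_div, Real.log_inv]
  norm_num

lemma klBin_eq_g {p : ℝ} (hp0 : 0 < p) (hp1 : p < 1) {q : ℝ} (hq : q ∈ Set.Icc (0:ℝ) 1) :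
    klBin q p = q * Real.log q + (1 - q) * Real.log (1 - q)
      - q * Real.log p - (1 - q) * Real.log (1 - p) := by
  have h1 : q * Real.log (q / p) = q * Real.log q - q * Real.log p := by
    rcases eq_or_lt_of_le hq.1 with h | h
    · rw [← h]; simp
    · rw [Real.log_div h.ne' hp0.ne']; ring
  have h2 : (1 - q) * Real.log ((1 - q) / (1 - p))
      = (1 - q) * Real.log (1 - q) - (1 - q) * Real.log (1 - p) := by
    rcases eq_or_lt_of_le (by linarith [hq.2] : (0:ℝ) ≤ 1 - q) with h | h
    · rw [← h]; simp
    · rw [Real.log_div h.ne' (by linarith : (1:ℝ) - p ≠ 0)]; ring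
  unfold klBin; rw [h1, h2]; ring

lemma exp_convex_bound {u c : ℝ} (hu0 : 0 ≤ u) (hu1 : u ≤ 1) :
    Real.exp (c * u) ≤ 1 - u + u * Real.exp c := by
  have h := convexOn_exp.2 (Set.mem_univ (0:ℝ)) (Set.mem_univ c)
    (by linarith : (0:ℝ) ≤ 1 - u) hu0 (by ring)
  simp only [smul_eq_mul, mul_zero, zero_add, Real.exp_zero, mul_one] at h
  calc Real.exp (c * u) = Real.exp (u * c) := by rw [mul_comm]
  _ ≤ 1 - u + u * Real.exp c := h

lemma integrable_of_bounded' {f : X → ℝ} {μ : Measure X} [IsFiniteMeasure μ]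
    (hm : Measurable f) (C : ℝ) (hC : ∀ z, |f z| ≤ C) : Integrable f μ :=
  Integrable.mono' (integrable_const C) hm.aestronglyMeasurable
    (Filter.Eventually.of_forall fun z => by simpa [Real.norm_eq_abs] using hC z)

lemma integral_exp_mul_le (μ : Measure X) [IsProbabilityMeasure μ] {f : X → ℝ}
    (hm : Measurable f) (h01 : ∀ z, f z ∈ Set.Icc (0:ℝ) 1) (c : ℝ) :
    ∫ z, Real.exp (c * f z) ∂μ
      ≤ 1 - (∫ z, f z ∂μ) + (∫ z, f z ∂μ) * Real.exp c := by
  have hfi : Integrable f μ := integrable_of_bounded' hm 1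
    (fun z => abs_le.mpr ⟨by linarith [(h01 z).1], (h01 z).2⟩)
  have hbd : ∀ z, |Real.exp (c * f z)| ≤ Real.exp |c| := by
    intro z
    rw [abs_of_pos (Real.exp_pos _)]
    apply Real.exp_le_exp.mpr
    rcases le_or_gt 0 c with h | h
    · calc c * f z ≤ c * 1 := by nlinarith [(h01 z).2, (h01 z).1]
      _ ≤ |c| := by rw [mul_one]; exact le_abs_self c
    · calc c * f z ≤ 0 := mul_nonpos_of_nonpos_of_nonneg h.le (h01 z).1
      _ ≤ |c| := abs_nonneg c
  have hei : Integrable (fun z => Real.exp (c * f z)) μ :=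
    integrable_of_bounded' ((hm.const_mul c).exp) (Real.exp |c|) hbd
  calc ∫ z, Real.exp (c * f z) ∂μ
      ≤ ∫ z, (1 - f z + f z * Real.exp c) ∂μ := by
        refine integral_mono hei ?_ (fun z => exp_convex_bound (h01 z).1 (h01 z).2)
        exact ((integrable_const 1).sub hfi).add (hfi.mul_const _)
    _ = 1 - (∫ z, f z ∂μ) + (∫ z, f z ∂μ) * Real.exp c := by
        have h1 : Integrable (fun z => 1 - f z) μ := (integrable_const 1).sub hfi
        have h2 : Integrable (fun z => f z * Real.exp c) μ := hfi.mul_const _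
        rw [integral_add h1 h2, integral_sub (integrable_const (1:ℝ)) hfi, integral_const,
          integral_mul_const]
        simp

lemma avg_mem {f : X → ℝ} (h01 : ∀ z, f z ∈ Set.Icc (0:ℝ) 1) {n : ℕ} (hn : 0 < n)
    (x : Fin n → X) : (∑ i, f (x i)) / n ∈ Set.Icc (0:ℝ) 1 := by
  have h1 : (0:ℝ) ≤ ∑ i, f (x i) := Finset.sum_nonneg fun i _ => (h01 _).1
  have h2 : ∑ i, f (x i) ≤ n := by
    calc ∑ i, f (x i) ≤ ∑ _i : Fin n, (1:ℝ) := Finset.sum_le_sum fun i _ => (h01 _).2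
    _ = n := by simp
  have hnR : (0:ℝ) < n := by exact_mod_cast hn
  exact ⟨div_nonneg h1 hnR.le, by rw [div_le_one hnR]; exact h2⟩

lemma tail_markov (μ : Measure X) [IsProbabilityMeasure μ] {f : X → ℝ}
    (hm : Measurable f) (h01 : ∀ z, f z ∈ Set.Icc (0:ℝ) 1) (n : ℕ) (hn : 0 < n)
    {c : ℝ} (hc : 0 ≤ c) (q : ℝ) :
    (Measure.pi fun _ : Fin n => μ) {x | q ≤ (∑ i, f (x i)) / n}
      ≤ ENNReal.ofReal (Real.exp (-(c * n * q)) *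
          (1 - (∫ z, f z ∂μ) + (∫ z, f z ∂μ) * Real.exp c) ^ n) := by
  letI : MeasureSpace X := ⟨μ⟩
  have hvol : (volume : Measure (Fin n → X)) = Measure.pi fun _ : Fin n => μ := rfl
  set p := ∫ z, f z ∂μ with hp
  set M := ∫ z, Real.exp (c * f z) ∂μ with hM
  have hMle : M ≤ 1 - p + p * Real.exp c := integral_exp_mul_le μ hm h01 c
  have hM0 : 0 ≤ M := integral_nonneg fun z => (Real.exp_pos _).le
  have hp0 : 0 ≤ p := integral_nonneg fun z => (h01 z).1
  have hp1 : p ≤ 1 := by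
    have hfi : Integrable f μ := integrable_of_bounded' hm 1
      (fun z => abs_le.mpr ⟨by linarith [(h01 z).1], (h01 z).2⟩)
    have h := integral_mono hfi (integrable_const (1:ℝ)) (fun z => (h01 z).2)
    simpa using h
  have hB0 : 0 ≤ 1 - p + p * Real.exp c := by
    nlinarith [Real.exp_pos c, Real.one_le_exp hc]
  set G : (Fin n → X) → ℝ := fun x => ∏ i, Real.exp (c * f (x i)) with hG
  have hGm : Measurable G := Finset.measurable_prod _ fun i _ =>
    ((hm.comp (measurable_pi_apply i)).const_mul c).exp
  have hbd : ∀ z, |Real.exp (c * f z)| ≤ Real.exp |c| := by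
    intro z
    rw [abs_of_pos (Real.exp_pos _)]
    apply Real.exp_le_exp.mpr
    calc c * f z ≤ c * 1 := by nlinarith [(h01 z).2, (h01 z).1]
    _ ≤ |c| := by rw [mul_one]; exact le_abs_self c
  have hei : Integrable (fun z => Real.exp (c * f z)) μ :=
    integrable_of_bounded' ((hm.const_mul c).exp) (Real.exp |c|) hbd
  have hGi : Integrable G (volume : Measure (Fin n → X)) :=
    Integrable.fin_nat_prod (E := fun _ : Fin n => X)
      (f := fun _ : Fin n => fun z => Real.exp (c * f z)) (fun _ => hei)
  have hGint : ∫ x, G x = M ^ n := by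
    rw [hG]
    rw [MeasureTheory.integral_fintype_prod_volume_eq_pow (ι := Fin n) (fun z => Real.exp (c * f z))]
    rw [Fintype.card_fin]; rfl
  have hnR : (0:ℝ) < n := by exact_mod_cast hn
  have hsub : {x : Fin n → X | q ≤ (∑ i, f (x i)) / n}
      ⊆ {x | Real.exp (c * n * q) ≤ G x} := by
    intro x hx
    have hx' : (n:ℝ) * q ≤ ∑ i, f (x i) := by
      rw [Set.mem_setOf_eq, le_div_iff₀ hnR] at hx
      linarith [hx]
    have hGx : G x = Real.exp (c * ∑ i, f (x i)) := by
      show (∏ i, Real.exp (c * f (x i))) = _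
      rw [← Real.exp_sum, Finset.mul_sum]
    rw [Set.mem_setOf_eq, hGx]
    apply Real.exp_le_exp.mpr
    calc c * n * q = c * ((n:ℝ) * q) := by ring
    _ ≤ c * ∑ i, f (x i) := mul_le_mul_of_nonneg_left hx' hc
  have hmarkov := mul_meas_ge_le_integral_of_nonneg
    (μ := (volume : Measure (Fin n → X)))
    (Filter.Eventually.of_forall fun x => Finset.prod_nonneg fun i _ => (Real.exp_pos _).le)
    hGi (Real.exp (c * n * q))
  rw [hGint] at hmarkov
  have hMpow : M ^ n ≤ (1 - p + p * Real.exp c) ^ n := pow_le_pow_left₀ hM0 hMle n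
  have hepos : (0:ℝ) < Real.exp (c * n * q) := Real.exp_pos _
  have htr : ((volume : Measure (Fin n → X)) {x | Real.exp (c * n * q) ≤ G x}).toReal
      ≤ Real.exp (-(c * n * q)) * (1 - p + p * Real.exp c) ^ n := by
    rw [Real.exp_neg, ← div_eq_inv_mul, le_div_iff₀ hepos, mul_comm]
    exact hmarkov.trans hMpow
  calc (Measure.pi fun _ : Fin n => μ) {x | q ≤ (∑ i, f (x i)) / n}
      ≤ (volume : Measure (Fin n → X)) {x | Real.exp (c * n * q) ≤ G x} := by
        rw [hvol]; exact measure_mono hsub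
    _ = ENNReal.ofReal (((volume : Measure (Fin n → X))
          {x | Real.exp (c * n * q) ≤ G x}).toReal) := by
        rw [ENNReal.ofReal_toReal (measure_ne_top _ _)]
    _ ≤ _ := ENNReal.ofReal_le_ofReal htr

lemma chernoff_q (μ : Measure X) [IsProbabilityMeasure μ] {f : X → ℝ}
    (hm : Measurable f) (h01 : ∀ z, f z ∈ Set.Icc (0:ℝ) 1) (n : ℕ) (hn : 0 < n)
    (hp0 : 0 < ∫ z, f z ∂μ) (hp1 : (∫ z, f z ∂μ) < 1)
    {q : ℝ} (hq : (∫ z, f z ∂μ) < q) (hq1 : q < 1) :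
    (Measure.pi fun _ : Fin n => μ) {x | q ≤ (∑ i, f (x i)) / n}
      ≤ ENNReal.ofReal (Real.exp (-(n * klBin q (∫ z, f z ∂μ)))) := by
  set p := ∫ z, f z ∂μ with hp
  have hq0 : 0 < q := hp0.trans hq
  have hnum : 0 < q * (1 - p) := mul_pos hq0 (by linarith)
  have hden : 0 < p * (1 - q) := mul_pos hp0 (by linarith)
  set c := Real.log (q * (1 - p) / (p * (1 - q))) with hcdef
  have hec : Real.exp c = q * (1 - p) / (p * (1 - q)) := Real.exp_log (div_pos hnum hden)
  have hc : 0 ≤ c := Real.log_nonneg (by rw [le_div_iff₀ hden]; nlinarith)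
  have h1 : 1 - p + p * Real.exp c = (1 - p) / (1 - q) := by
    have h1q : (1:ℝ) - q ≠ 0 := by linarith
    have hpne : p ≠ 0 := hp0.ne'
    rw [hec]
    field_simp
    ring
  refine le_trans (tail_markov μ hm h01 n hn hc q) (le_of_eq ?_)
  rw [h1]
  have hdpos : (0:ℝ) < (1 - p) / (1 - q) := div_pos (by linarith) (by linarith)
  congr 1
  rw [← Real.exp_log hdpos, ← Real.exp_nat_mul, ← Real.exp_add]
  congr 1
  have hlogc : c = Real.log q + Real.log (1 - p) - (Real.log p + Real.log (1 - q)) := by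
    rw [hcdef, Real.log_div hnum.ne' hden.ne', Real.log_mul hq0.ne' (by linarith),
      Real.log_mul hp0.ne' (by linarith)]
  have hkl : klBin q p = q * (Real.log q - Real.log p)
      + (1 - q) * (Real.log (1 - q) - Real.log (1 - p)) := by
    unfold klBin
    rw [Real.log_div hq0.ne' hp0.ne', Real.log_div (by linarith : (1:ℝ) - q ≠ 0)
      (by linarith : (1:ℝ) - p ≠ 0)]
  rw [Real.log_div (by linarith : (1:ℝ) - p ≠ 0) (by linarith : (1:ℝ) - q ≠ 0), hkl, hlogc]
  ring

lemma chernoff_one (μ : Measure X) [IsProbabilityMeasure μ] {f : X → ℝ}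
    (hm : Measurable f) (h01 : ∀ z, f z ∈ Set.Icc (0:ℝ) 1) (n : ℕ) (hn : 0 < n)
    (hp0 : 0 < ∫ z, f z ∂μ) (hp1 : (∫ z, f z ∂μ) < 1) :
    (Measure.pi fun _ : Fin n => μ) {x | (1:ℝ) ≤ (∑ i, f (x i)) / n}
      ≤ ENNReal.ofReal (Real.exp (-(n * klBin 1 (∫ z, f z ∂μ)))) := by
  set p := ∫ z, f z ∂μ with hp
  set ν := Measure.pi fun _ : Fin n => μ with hν
  set T := (ν {x | (1:ℝ) ≤ (∑ i, f (x i)) / n}).toReal with hT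
  have key : ∀ c : ℝ, 0 ≤ c → T ≤ ((1 - p) * Real.exp (-c) + p) ^ n := by
    intro c hc
    have h := tail_markov μ hm h01 n hn hc 1
    have heq : Real.exp (-(c * n * 1)) * (1 - p + p * Real.exp c) ^ n
        = ((1 - p) * Real.exp (-c) + p) ^ n := by
      rw [mul_one, show -(c * (n:ℝ)) = (n:ℝ) * (-c) by ring, Real.exp_nat_mul, ← mul_pow]
      congr 1
      rw [Real.exp_neg]
      field_simp
    rw [heq] at h
    exact ENNReal.toReal_le_of_le_ofReal
      (pow_nonneg (by nlinarith [Real.exp_pos (-c)]) n) h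
  have hlim : Tendsto (fun c => ((1 - p) * Real.exp (-c) + p) ^ n) atTop (𝓝 (p ^ n)) := by
    have h0 : Tendsto (fun c => (1 - p) * Real.exp (-c) + p) atTop (𝓝 p) := by
      have := (Real.tendsto_exp_neg_atTop_nhds_zero.const_mul (1 - p)).add_const p
      simpa using this
    exact h0.pow n
  have hTle : T ≤ p ^ n := ge_of_tendsto hlim
    (Filter.eventually_atTop.2 ⟨0, fun c hc => key c hc⟩)
  have : ν {x | (1:ℝ) ≤ (∑ i, f (x i)) / n} = ENNReal.ofReal T :=
    (ENNReal.ofReal_toReal (measure_ne_top _ _)).symm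
  rw [this]
  refine le_trans (ENNReal.ofReal_le_ofReal hTle) (le_of_eq ?_)
  congr 1
  rw [klBin_one, show -((n:ℝ) * -Real.log p) = (n:ℝ) * Real.log p by ring,
    Real.exp_nat_mul, Real.exp_log hp0]

lemma upper_event (μ : Measure X) [IsProbabilityMeasure μ] {f : X → ℝ}
    (hm : Measurable f) (h01 : ∀ z, f z ∈ Set.Icc (0:ℝ) 1) (n : ℕ) (hn : 0 < n)
    {t : ℝ} (ht : 0 < t)
    (hp0 : 0 < ∫ z, f z ∂μ) (hp1 : (∫ z, f z ∂μ) < 1) :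
    (Measure.pi fun _ : Fin n => μ)
      {x | (∫ z, f z ∂μ) ≤ (∑ i, f (x i)) / n ∧
        t < klBin ((∑ i, f (x i)) / n) (∫ z, f z ∂μ)}
      ≤ ENNReal.ofReal (Real.exp (-(n * t))) := by
  set p := ∫ z, f z ∂μ with hp
  set ν := Measure.pi fun _ : Fin n => μ with hν
  have hS01 : ∀ x : Fin n → X, (∑ i, f (x i)) / n ∈ Set.Icc (0:ℝ) 1 :=
    fun x => avg_mem h01 hn x
  set K := {q : ℝ | q ∈ Set.Icc p 1 ∧ t ≤ klBin q p} with hK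
  rcases K.eq_empty_or_nonempty with hKe | hKne
  · have hev : {x : Fin n → X | p ≤ (∑ i, f (x i)) / n ∧
        t < klBin ((∑ i, f (x i)) / n) p} = ∅ := by
      rw [Set.eq_empty_iff_forall_notMem]
      intro x ⟨h1, h2⟩
      have : ((∑ i, f (x i)) / n) ∈ K := ⟨⟨h1, (hS01 x).2⟩, h2.le⟩
      rw [hKe] at this
      exact this
    rw [hev]
    simp
  · have hbdd : BddBelow K := ⟨p, fun r hr => hr.1.1⟩
    have hKcl : IsClosed K := by
      have hKeq : K = Set.Icc p 1 ∩ {q : ℝ | t ≤ q * Real.log q + (1 - q) * Real.log (1 - q)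
          - q * Real.log p - (1 - q) * Real.log (1 - p)} := by
        ext r
        simp only [hK, Set.mem_setOf_eq, Set.mem_inter_iff, Set.mem_Icc]
        constructor
        · rintro ⟨h1, h2⟩
          exact ⟨h1, by rwa [← klBin_eq_g hp0 hp1 ⟨by linarith [h1.1, hp0], h1.2⟩]⟩
        · rintro ⟨h1, h2⟩
          exact ⟨h1, by rwa [klBin_eq_g hp0 hp1 ⟨by linarith [h1.1, hp0], h1.2⟩]⟩
      rw [hKeq]
      have c1 : Continuous fun r : ℝ => r * Real.log r := Real.continuous_mul_log
      have c2 : Continuous fun r : ℝ => (1 - r) * Real.log (1 - r) :=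
        c1.comp (continuous_const.sub continuous_id)
      have cg : Continuous fun r : ℝ => r * Real.log r + (1 - r) * Real.log (1 - r)
          - r * Real.log p - (1 - r) * Real.log (1 - p) :=
        (((c1.add c2).sub (continuous_id.mul continuous_const)).sub
          ((continuous_const.sub continuous_id).mul continuous_const))
      exact isClosed_Icc.inter (isClosed_le continuous_const cg)
    set qs := sInf K with hqs
    have hqsK : qs ∈ K := hKcl.csInf_mem hKne hbdd
    have hqsp : p < qs := by
      rcases eq_or_lt_of_le hqsK.1.1 with h | h
      · exfalso
        have h0 : klBin qs p = 0 := by rw [← h]; exact klBin_self hp0.ne' hp1.ne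
        have h2 := hqsK.2
        rw [h0] at h2
        linarith
      · exact h
    have hsub : {x : Fin n → X | p ≤ (∑ i, f (x i)) / n ∧
        t < klBin ((∑ i, f (x i)) / n) p} ⊆ {x | qs ≤ (∑ i, f (x i)) / n} := by
      rintro x ⟨h1, h2⟩
      exact csInf_le hbdd ⟨⟨h1, (hS01 x).2⟩, h2.le⟩
    refine le_trans (measure_mono hsub) ?_
    have hklt : t ≤ klBin qs p := hqsK.2
    have hmono : Real.exp (-(n * klBin qs p)) ≤ Real.exp (-(n * t)) := by
      apply Real.exp_le_exp.mpr
      have : (n:ℝ) * t ≤ (n:ℝ) * klBin qs p :=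
        mul_le_mul_of_nonneg_left hklt (by positivity)
      linarith
    rcases eq_or_lt_of_le hqsK.1.2 with h1 | h1
    · rw [h1]
      exact le_trans (chernoff_one μ hm h01 n hn hp0 hp1)
        (ENNReal.ofReal_le_ofReal (by rw [← h1]; exact hmono))
    · exact le_trans (chernoff_q μ hm h01 n hn hp0 hp1 hqsp h1)
        (ENNReal.ofReal_le_ofReal hmono)

lemma full_tail (μ : Measure X) [IsProbabilityMeasure μ] {f : X → ℝ}
    (hm : Measurable f) (h01 : ∀ z, f z ∈ Set.Icc (0:ℝ) 1) (n : ℕ) (hn : 0 < n)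
    {t : ℝ} (ht : 0 < t) :
    (Measure.pi fun _ : Fin n => μ)
      {x | t < klBin ((∑ i, f (x i)) / n) (∫ z, f z ∂μ)}
      ≤ ENNReal.ofReal (2 * Real.exp (-(n * t))) := by
  set p := ∫ z, f z ∂μ with hp
  have hfi : Integrable f μ := integrable_of_bounded' hm 1
    (fun z => abs_le.mpr ⟨by linarith [(h01 z).1], (h01 z).2⟩)
  have hp0 : 0 ≤ p := integral_nonneg fun z => (h01 z).1
  have hp1 : p ≤ 1 := by
    have h := integral_mono hfi (integrable_const (1:ℝ)) (fun z => (h01 z).2)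
    simpa using h
  have hS01 : ∀ x : Fin n → X, (∑ i, f (x i)) / n ∈ Set.Icc (0:ℝ) 1 :=
    fun x => avg_mem h01 hn x
  have h2e : (0:ℝ) ≤ 2 * Real.exp (-(n * t)) := by positivity
  rcases eq_or_lt_of_le hp0 with hp0' | hp0'
  · -- p = 0
    have hev : {x : Fin n → X | t < klBin ((∑ i, f (x i)) / n) p} = ∅ := by
      rw [Set.eq_empty_iff_forall_notMem]
      intro x hx
      rw [Set.mem_setOf_eq, ← hp0'] at hx
      set q := (∑ i, f (x i)) / n
      have hkl : klBin q 0 = (1 - q) * Real.log (1 - q) := by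
        unfold klBin
        rw [div_zero, Real.log_zero, sub_zero, div_one]
        ring
      have hq1 : q ≤ 1 := (hS01 x).2
      have hlog : Real.log (1 - q) ≤ 0 := by
        rcases eq_or_lt_of_le hq1 with h | h
        · rw [← h]; simp
        · exact Real.log_nonpos (by linarith) (by linarith [(hS01 x).1])
      nlinarith [hx, hkl, hlog, (hS01 x).1]
    rw [hev]
    simp [h2e]
  rcases eq_or_lt_of_le hp1 with hp1' | hp1'
  · -- p = 1
    have hev : {x : Fin n → X | t < klBin ((∑ i, f (x i)) / n) p} = ∅ := by
      rw [Set.eq_empty_iff_forall_notMem]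
      intro x hx
      rw [Set.mem_setOf_eq, hp1'] at hx
      set q := (∑ i, f (x i)) / n
      have hkl : klBin q 1 = q * Real.log q := by
        unfold klBin
        rw [div_one, sub_self, div_zero, Real.log_zero]
        ring
      have hq0 : 0 ≤ q := (hS01 x).1
      have hlog : Real.log q ≤ 0 := by
        rcases eq_or_lt_of_le hq0 with h | h
        · rw [← h]; simp
        · exact Real.log_nonpos hq0 (hS01 x).2
      nlinarith [hx, hkl, hlog]
    rw [hev]
    simp [h2e]
  · -- 0 < p < 1
    set g : X → ℝ := fun z => 1 - f z with hg
    have hm' : Measurable g := measurable_const.sub hm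
    have h01' : ∀ z, g z ∈ Set.Icc (0:ℝ) 1 :=
      fun z => ⟨by simp only [hg]; linarith [(h01 z).2], by simp only [hg]; linarith [(h01 z).1]⟩
    have hp' : ∫ z, g z ∂μ = 1 - p := by
      rw [hg]
      rw [integral_sub (integrable_const (1:ℝ)) hfi]
      simp [hp]
    have hnR : (0:ℝ) < n := by exact_mod_cast hn
    have hS' : ∀ x : Fin n → X, (∑ i, g (x i)) / n = 1 - (∑ i, f (x i)) / n := by
      intro x
      rw [hg]
      rw [Finset.sum_sub_distrib, Finset.sum_const, Finset.card_univ, Fintype.card_fin,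
        nsmul_eq_mul, mul_one, sub_div, div_self hnR.ne']
    have hupper := upper_event μ hm h01 n hn ht hp0' hp1'
    have hlower := upper_event μ hm' h01' n hn ht
      (by rw [hp']; linarith) (by rw [hp']; linarith)
    have hsub : {x : Fin n → X | t < klBin ((∑ i, f (x i)) / n) p}
        ⊆ {x | p ≤ (∑ i, f (x i)) / n ∧ t < klBin ((∑ i, f (x i)) / n) p}
          ∪ {x | (∫ z, g z ∂μ) ≤ (∑ i, g (x i)) / n ∧
              t < klBin ((∑ i, g (x i)) / n) (∫ z, g z ∂μ)} := by
      intro x hx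
      rcases le_total p ((∑ i, f (x i)) / n) with h | h
      · exact Or.inl ⟨h, hx⟩
      · refine Or.inr ⟨by rw [hS', hp']; linarith, ?_⟩
        rw [hS', hp', klBin_symm]
        exact hx
    calc (Measure.pi fun _ : Fin n => μ) {x | t < klBin ((∑ i, f (x i)) / n) p}
        ≤ (Measure.pi fun _ : Fin n => μ) ({x | p ≤ (∑ i, f (x i)) / n ∧
            t < klBin ((∑ i, f (x i)) / n) p}
          ∪ {x | (∫ z, g z ∂μ) ≤ (∑ i, g (x i)) / n ∧
              t < klBin ((∑ i, g (x i)) / n) (∫ z, g z ∂μ)}) := measure_mono hsub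
      _ ≤ _ + _ := measure_union_le _ _
      _ ≤ ENNReal.ofReal (Real.exp (-(n * t))) + ENNReal.ofReal (Real.exp (-(n * t))) :=
          add_le_add hupper hlower
      _ = ENNReal.ofReal (2 * Real.exp (-(n * t))) := by
          rw [← ENNReal.ofReal_add (Real.exp_pos _).le (Real.exp_pos _).le]
          congr 1
          ring


end Aux

theorem statement5
    (μ : Measure X) [IsProbabilityMeasure μ]
    (pr : Measure H) [IsProbabilityMeasure pr]
    (ℓ : H → X → ℝ) (hmeas : Measurable (Function.uncurry ℓ))
    (hrange : ∀ h z, ℓ h z ∈ Set.Icc (0 : ℝ) 1)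
    (n : ℕ) (hn : 8 ≤ n) (β : ℝ) (hβ : 0 < β)
    (δ : ℝ) (hδ : 0 < δ) :
    (∀ (h : H) (x : Fin n → X), Lam ℓ pr n β h x ≤ β) ∧
    ENNReal.ofReal (1 - δ) ≤
      jointRho ℓ μ pr n β {p : H × (Fin n → X) |
        klBin (empLoss ℓ n p.1 p.2) (trueLoss ℓ μ p.1) ≤
          (1 / n) * (β + Real.log (2 * Real.sqrt n / δ))} := by
  classical
  have hnpos : 0 < n := by omega
  have hnR : (0:ℝ) < n := by exact_mod_cast hnpos
  have hL01 : ∀ (g : H) (x : Fin n → X), empLoss ℓ n g x ∈ Set.Icc (0:ℝ) 1 := by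
    intro g x
    exact avg_mem (f := fun z => ℓ g z) (hrange g) hnpos x
  -- Part 1
  have part1 : ∀ (h : H) (x : Fin n → X), Lam ℓ pr n β h x ≤ β := by
    intro h x
    set r₀ : ℝ := 1 - empLoss ℓ n h x with hr₀
    have hset : {g : H | empLoss ℓ n g x ≤ empLoss ℓ n h x + r₀} = Set.univ := by
      ext g
      simp only [Set.mem_setOf_eq, Set.mem_univ, iff_true]
      have := (hL01 g x).2
      rw [hr₀]; linarith
    have hphi : phiHat ℓ pr n (empLoss ℓ n h x + r₀) x = 1 := by
      rw [phiHat, hset]; simp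
    have hbdd : BddBelow {v : ℝ | ∃ r : ℝ, 0 < phiHat ℓ pr n (empLoss ℓ n h x + r) x ∧
        v = β * r + Real.log (1 / phiHat ℓ pr n (empLoss ℓ n h x + r) x)} := by
      refine ⟨-β, ?_⟩
      rintro v ⟨r, hrpos, rfl⟩
      have hne : {g : H | empLoss ℓ n g x ≤ empLoss ℓ n h x + r}.Nonempty := by
        by_contra hcon
        rw [Set.not_nonempty_iff_eq_empty] at hcon
        rw [phiHat, hcon] at hrpos
        simp at hrpos
      obtain ⟨g, hg⟩ := hne
      have hr1 : -1 ≤ r := by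
        have h1 := (hL01 g x).1
        have h2 := (hL01 h x).2
        simp only [Set.mem_setOf_eq] at hg
        linarith
      have hphile : phiHat ℓ pr n (empLoss ℓ n h x + r) x ≤ 1 := by
        rw [phiHat]
        exact ENNReal.toReal_le_of_le_ofReal one_pos.le (by simpa using prob_le_one)
      have hlog : 0 ≤ Real.log (1 / phiHat ℓ pr n (empLoss ℓ n h x + r) x) := by
        apply Real.log_nonneg
        rw [le_div_iff₀ hrpos]
        linarith
      nlinarith [hβ.le]
    have hmem : β * r₀ + Real.log (1 / phiHat ℓ pr n (empLoss ℓ n h x + r₀) x)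
        ∈ {v : ℝ | ∃ r : ℝ, 0 < phiHat ℓ pr n (empLoss ℓ n h x + r) x ∧
          v = β * r + Real.log (1 / phiHat ℓ pr n (empLoss ℓ n h x + r) x)} :=
      ⟨r₀, by rw [hphi]; norm_num, rfl⟩
    have hle : Lam ℓ pr n β h x ≤ β * r₀ +
        Real.log (1 / phiHat ℓ pr n (empLoss ℓ n h x + r₀) x) := csInf_le hbdd hmem
    rw [hphi] at hle
    simp only [one_div, inv_one, Real.log_one, add_zero] at hle
    have h0 := (hL01 h x).1
    nlinarith [hle]
  refine ⟨part1, ?_⟩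
  rcases le_or_gt δ 1 with hδ1 | hδ1
  swap
  · rw [ENNReal.ofReal_of_nonpos (by linarith)]
    exact zero_le
  -- Part 2
  set ν : Measure (Fin n → X) := Measure.pi fun _ : Fin n => μ with hν
  set T : ℝ := (1 / (n:ℝ)) * (β + Real.log (2 * Real.sqrt n / δ)) with hTdef
  have hsqrt1 : (1:ℝ) ≤ Real.sqrt n := by
    rw [show (1:ℝ) = Real.sqrt 1 by simp]
    exact Real.sqrt_le_sqrt (by exact_mod_cast hnpos)
  have hargpos : (0:ℝ) < 2 * Real.sqrt n / δ := by positivity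
  have hlogpos : 0 ≤ Real.log (2 * Real.sqrt n / δ) := by
    apply Real.log_nonneg
    rw [le_div_iff₀ hδ]
    nlinarith
  have hT : 0 < T := by
    apply mul_pos (by positivity)
    linarith
  have hnT : (n:ℝ) * T = β + Real.log (2 * Real.sqrt n / δ) := by
    rw [hTdef, ← mul_assoc, mul_one_div, div_self hnR.ne', one_mul]
  -- measurability
  have mEmp : Measurable fun p : H × (Fin n → X) => empLoss ℓ n p.1 p.2 := by
    apply Measurable.div_const
    apply Finset.measurable_sum
    intro i _
    exact hmeas.comp (measurable_fst.prodMk ((measurable_pi_apply i).comp measurable_snd))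
  have mTrue : Measurable (trueLoss ℓ μ) :=
    (hmeas.stronglyMeasurable.integral_prod_right').measurable
  have mZ : Measurable (partitionZ ℓ pr n β) := by
    have hF : Measurable fun w : (Fin n → X) × H => Real.exp (-β * empLoss ℓ n w.2 w.1) :=
      ((mEmp.comp (measurable_snd.prodMk measurable_fst)).const_mul (-β)).exp
    exact (hF.stronglyMeasurable.integral_prod_right').measurable
  have mDens : Measurable fun w : H × (Fin n → X) =>
      ENNReal.ofReal (Real.exp (-β * empLoss ℓ n w.1 w.2) / partitionZ ℓ pr n β w.2) :=
    ENNReal.measurable_ofReal.comp (((mEmp.const_mul (-β)).exp).div (mZ.comp measurable_snd))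
  -- Z facts
  have hExm : ∀ x : Fin n → X, Measurable fun h : H => Real.exp (-β * empLoss ℓ n h x) :=
    fun x => ((mEmp.comp (measurable_prodMk_right)).const_mul (-β)).exp
  have hEbd : ∀ (h : H) (x : Fin n → X),
      Real.exp (-β) ≤ Real.exp (-β * empLoss ℓ n h x) ∧
        Real.exp (-β * empLoss ℓ n h x) ≤ 1 := by
    intro h x
    constructor
    · apply Real.exp_le_exp.mpr
      nlinarith [(hL01 h x).2, hβ]
    · rw [show (1:ℝ) = Real.exp 0 by simp]
      apply Real.exp_le_exp.mpr
      nlinarith [(hL01 h x).1, hβ]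
  have hEint : ∀ x : Fin n → X,
      Integrable (fun h : H => Real.exp (-β * empLoss ℓ n h x)) pr := by
    intro x
    refine integrable_of_bounded' (hExm x) 1 (fun h => ?_)
    rw [abs_of_pos (Real.exp_pos _)]
    exact (hEbd h x).2
  have hZlow : ∀ x : Fin n → X, Real.exp (-β) ≤ partitionZ ℓ pr n β x := by
    intro x
    calc Real.exp (-β) = ∫ _h, Real.exp (-β) ∂pr := by simp
    _ ≤ partitionZ ℓ pr n β x := integral_mono (integrable_const _) (hEint x)
        (fun h => (hEbd h x).1)
  have hZpos : ∀ x : Fin n → X, 0 < partitionZ ℓ pr n β x :=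
    fun x => lt_of_lt_of_le (Real.exp_pos _) (hZlow x)
  -- gibbs facts
  have hgibbs_univ : ∀ x : Fin n → X, gibbs ℓ pr n β x Set.univ = 1 := by
    intro x
    rw [gibbs, withDensity_apply _ MeasurableSet.univ, Measure.restrict_univ]
    rw [← ofReal_integral_eq_lintegral_ofReal ((hEint x).div_const _)
      (Filter.Eventually.of_forall fun h =>
        div_nonneg (Real.exp_pos _).le (hZpos x).le)]
    rw [integral_div]
    have hnum : (∫ a, Real.exp (-β * empLoss ℓ n a x) ∂pr) = partitionZ ℓ pr n β x := rfl
    rw [hnum, div_self (hZpos x).ne']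
    exact ENNReal.ofReal_one
  have hgibbs_le : ∀ (x : Fin n → X) (A : Set H), MeasurableSet A →
      gibbs ℓ pr n β x A ≤ ENNReal.ofReal (Real.exp β) * pr A := by
    intro x A hA
    rw [gibbs, withDensity_apply _ hA]
    calc ∫⁻ h in A, ENNReal.ofReal
          (Real.exp (-β * empLoss ℓ n h x) / partitionZ ℓ pr n β x) ∂pr
        ≤ ∫⁻ _h in A, ENNReal.ofReal (Real.exp β) ∂pr := by
          apply lintegral_mono
          intro h
          apply ENNReal.ofReal_le_ofReal
          calc Real.exp (-β * empLoss ℓ n h x) / partitionZ ℓ pr n β x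
              ≤ 1 / partitionZ ℓ pr n β x :=
                (div_le_div_iff_of_pos_right (hZpos x)).mpr (hEbd h x).2
            _ ≤ 1 / Real.exp (-β) :=
                one_div_le_one_div_of_le (Real.exp_pos _) (hZlow x)
            _ = Real.exp β := by rw [Real.exp_neg, one_div, inv_inv]
      _ = ENNReal.ofReal (Real.exp β) * pr A := by rw [setLIntegral_const]
  -- Bad set
  set Bad : Set (H × (Fin n → X)) :=
    {w | T < klBin (empLoss ℓ n w.1 w.2) (trueLoss ℓ μ w.1)} with hBadDef
  have mKl : Measurable fun w : H × (Fin n → X) =>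
      klBin (empLoss ℓ n w.1 w.2) (trueLoss ℓ μ w.1) := by
    apply Measurable.add
    · exact mEmp.mul ((mEmp.div (mTrue.comp measurable_fst)).log)
    · exact (measurable_const.sub mEmp).mul
        (((measurable_const.sub mEmp).div
          (measurable_const.sub (mTrue.comp measurable_fst))).log)
  have hBadMeas : MeasurableSet Bad := measurableSet_lt measurable_const mKl
  have hpre : ∀ (x : Fin n → X) (s : Set (H × (Fin n → X))), MeasurableSet s →
      MeasurableSet ((fun h : H => (h, x)) ⁻¹' s) :=
    fun x s hs => measurable_prodMk_right hs
  -- kernel measurability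
  have hK : Measurable fun x : Fin n → X =>
      Measure.map (fun h : H => (h, x)) (gibbs ℓ pr n β x) := by
    apply Measure.measurable_of_measurable_coe
    intro s hs
    have heq : ∀ x : Fin n → X,
        Measure.map (fun h : H => (h, x)) (gibbs ℓ pr n β x) s
          = ∫⁻ h, (s.indicator (1 : H × (Fin n → X) → ℝ≥0∞) (h, x)) *
              ENNReal.ofReal (Real.exp (-β * empLoss ℓ n h x) / partitionZ ℓ pr n β x) ∂pr := by
      intro x
      rw [Measure.map_apply measurable_prodMk_right hs, gibbs,
        withDensity_apply _ (hpre x s hs), ← lintegral_indicator (hpre x s hs) _]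
      congr 1
      ext h
      by_cases hmem : (h, x) ∈ s
      · simp [Set.indicator_of_mem, hmem, Set.mem_preimage]
      · simp [Set.indicator_of_notMem, hmem, Set.mem_preimage]
    simp only [heq]
    exact Measurable.lintegral_prod_left'
      ((measurable_one.indicator hs).mul mDens)
  have hρ_apply : ∀ s : Set (H × (Fin n → X)), MeasurableSet s →
      jointRho ℓ μ pr n β s = ∫⁻ x, gibbs ℓ pr n β x ((fun h : H => (h, x)) ⁻¹' s) ∂ν := by
    intro s hs
    rw [jointRho, Measure.bind_apply hs hK.aemeasurable]
    refine lintegral_congr fun x => ?_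
    rw [Measure.map_apply measurable_prodMk_right hs]
  have hρuniv : jointRho ℓ μ pr n β Set.univ = 1 := by
    rw [hρ_apply Set.univ MeasurableSet.univ]
    simp only [Set.preimage_univ, hgibbs_univ]
    simp
  -- slice measurability
  have heq2 : ∀ x : Fin n → X, pr ((fun h : H => (h, x)) ⁻¹' Bad)
      = ∫⁻ h, Bad.indicator (1 : H × (Fin n → X) → ℝ≥0∞) (h, x) ∂pr := by
    intro x
    rw [← lintegral_indicator_one (hpre x Bad hBadMeas)]
    refine lintegral_congr fun h => ?_
    by_cases hmem : (h, x) ∈ Bad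
    · simp [Set.indicator_of_mem, hmem, Set.mem_preimage]
    · simp [Set.indicator_of_notMem, hmem, Set.mem_preimage]
  have mSlice : Measurable fun x : Fin n → X => pr ((fun h : H => (h, x)) ⁻¹' Bad) := by
    simp only [heq2]
    exact Measurable.lintegral_prod_left' (measurable_one.indicator hBadMeas)
  -- per-h tail bound
  have hft : ∀ h : H, ν {x | T < klBin (empLoss ℓ n h x) (trueLoss ℓ μ h)}
      ≤ ENNReal.ofReal (2 * Real.exp (-(n * T))) := by
    intro h
    have := full_tail μ (f := fun z => ℓ h z)
      (hmeas.comp measurable_prodMk_left) (hrange h) n hnpos hT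
    exact this
  -- main bound on Bad
  have hρBad : jointRho ℓ μ pr n β Bad ≤ ENNReal.ofReal δ := by
    have step1 : jointRho ℓ μ pr n β Bad
        = ∫⁻ x, gibbs ℓ pr n β x ((fun h : H => (h, x)) ⁻¹' Bad) ∂ν :=
      hρ_apply Bad hBadMeas
    have step2 : ∫⁻ x, gibbs ℓ pr n β x ((fun h : H => (h, x)) ⁻¹' Bad) ∂ν
        ≤ ENNReal.ofReal (Real.exp β) * ∫⁻ x, pr ((fun h : H => (h, x)) ⁻¹' Bad) ∂ν := by
      rw [← lintegral_const_mul _ mSlice]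
      exact lintegral_mono fun x => hgibbs_le x _ (hpre x Bad hBadMeas)
    have step3 : ∫⁻ x, pr ((fun h : H => (h, x)) ⁻¹' Bad) ∂ν
        ≤ ENNReal.ofReal (2 * Real.exp (-(n * T))) := by
      have hswap : ∫⁻ x, pr ((fun h : H => (h, x)) ⁻¹' Bad) ∂ν
          = ∫⁻ h, ∫⁻ x, Bad.indicator (1 : H × (Fin n → X) → ℝ≥0∞) (h, x) ∂ν ∂pr := by
        simp only [heq2]
        exact lintegral_lintegral_swap
          (((measurable_one.indicator hBadMeas).comp measurable_swap).aemeasurable)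
      rw [hswap]
      have hinner : ∀ h : H, ∫⁻ x, Bad.indicator (1 : H × (Fin n → X) → ℝ≥0∞) (h, x) ∂ν
          = ν {x | T < klBin (empLoss ℓ n h x) (trueLoss ℓ μ h)} := by
        intro h
        have hseteq : (fun x : Fin n → X => Bad.indicator (1 : H × (Fin n → X) → ℝ≥0∞) (h, x))
            = ({x : Fin n → X | T < klBin (empLoss ℓ n h x) (trueLoss ℓ μ h)}).indicator
              (1 : (Fin n → X) → ℝ≥0∞) := by
          ext x
          by_cases hmem : T < klBin (empLoss ℓ n h x) (trueLoss ℓ μ h)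
          · rw [Set.indicator_of_mem (by exact hmem : (h, x) ∈ Bad),
              Set.indicator_of_mem (by exact hmem)]
            rfl
          · rw [Set.indicator_of_notMem (by exact hmem : (h, x) ∉ Bad),
              Set.indicator_of_notMem (by exact hmem)]
        rw [hseteq, lintegral_indicator_one]
        exact measurable_prodMk_left hBadMeas
      calc ∫⁻ h, ∫⁻ x, Bad.indicator (1 : H × (Fin n → X) → ℝ≥0∞) (h, x) ∂ν ∂pr
          ≤ ∫⁻ _h, ENNReal.ofReal (2 * Real.exp (-(n * T))) ∂pr := by
            refine lintegral_mono fun h => ?_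
            exact le_trans (le_of_eq (hinner h)) (hft h)
        _ = ENNReal.ofReal (2 * Real.exp (-(n * T))) := by simp
    calc jointRho ℓ μ pr n β Bad
        ≤ ENNReal.ofReal (Real.exp β) * ENNReal.ofReal (2 * Real.exp (-(n * T))) := by
          rw [step1]
          exact le_trans step2 (by gcongr)
      _ = ENNReal.ofReal (Real.exp β * (2 * Real.exp (-(n * T)))) :=
          (ENNReal.ofReal_mul (Real.exp_pos _).le).symm
      _ ≤ ENNReal.ofReal δ := by
          apply ENNReal.ofReal_le_ofReal
          rw [hnT]
          have hexp : Real.exp β * (2 * Real.exp (-(β + Real.log (2 * Real.sqrt n / δ))))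
              = 2 * Real.exp (-(Real.log (2 * Real.sqrt n / δ))) := by
            rw [show -(β + Real.log (2 * Real.sqrt n / δ))
                = -β + -(Real.log (2 * Real.sqrt n / δ)) by ring,
              Real.exp_add, Real.exp_neg β]
            have := Real.exp_ne_zero β
            field_simp
          rw [hexp, Real.exp_neg, Real.exp_log hargpos, inv_div]
          have h2s : (2:ℝ) ≤ 2 * Real.sqrt n := by linarith
          have hd1 : δ / (2 * Real.sqrt n) ≤ δ / 2 :=
            div_le_div_of_nonneg_left hδ.le two_pos h2s
          linarith
  -- conclude
  have hGoodEq : {p : H × (Fin n → X) |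
      klBin (empLoss ℓ n p.1 p.2) (trueLoss ℓ μ p.1) ≤
        (1 / n) * (β + Real.log (2 * Real.sqrt n / δ))} = Badᶜ := by
    ext w
    simp only [hBadDef, Set.mem_setOf_eq, Set.mem_compl_iff, not_lt, hTdef]
  rw [hGoodEq]
  have hBadne : jointRho ℓ μ pr n β Bad ≠ ⊤ :=
    (lt_of_le_of_lt hρBad ENNReal.ofReal_lt_top).ne
  rw [measure_compl hBadMeas hBadne, hρuniv]
  calc ENNReal.ofReal (1 - δ) ≤ 1 - ENNReal.ofReal δ := by
        apply ENNReal.le_sub_of_add_le_right ENNReal.ofReal_ne_top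
        rw [← ENNReal.ofReal_add (by linarith) hδ.le]
        simp
    _ ≤ 1 - jointRho ℓ μ pr n β Bad := tsub_le_tsub_left hρBad 1
end
end

section
/- Fix x ∈ X^n and suppose π(Ĥ_min(x)) > 0. Then Λ_β(h,x) converges to ln(1/π(Ĥ_min(x))) in probability as β → ∞, where h ∼ Ĝ_β(x): for every η > 0, Pr_{h∼Ĝ_β(x)}{ |Λ_β(h,x) − ln(1/π(Ĥ_min(x)))| > η } → 0 as β → ∞. -/
open MeasureTheory Real Filter
open scoped ENNReal

noncomputable section

variable {H X : Type*} [MeasurableSpace H] [MeasurableSpace X]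

theorem aux_statement11 (pr : Measure H) [IsProbabilityMeasure pr] (f : H → ℝ)
    (hfm : Measurable f) (hfnn : ∀ h, 0 ≤ f h) (m : ℝ)
    (hae : ∀ᵐ h ∂pr, m ≤ f h) (hpos : 0 < pr {h | f h = m})
    (η : ℝ) (hη : 0 < η) :
    Tendsto (fun β : ℝ =>
      pr.withDensity (fun h => ENNReal.ofReal (Real.exp (-β * f h) /
          ∫ g, Real.exp (-β * f g) ∂pr))
        {h | η < |sInf {v : ℝ | ∃ r : ℝ, 0 < (pr {g | f g ≤ f h + r}).toReal ∧
            v = β * r + Real.log (1 / (pr {g | f g ≤ f h + r}).toReal)} -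
          Real.log (1 / (pr {g | f g = m}).toReal)|})
      atTop (nhds 0) := by
  have hMne : pr {g | f g = m} ≠ ⊤ := measure_ne_top _ _
  set Mr : ℝ := (pr {g | f g = m}).toReal with hMrdef
  have hMrpos : 0 < Mr := ENNReal.toReal_pos hpos.ne' hMne
  have hMrle1 : Mr ≤ 1 := by
    have h1 := ENNReal.toReal_mono (a := pr {g | f g = m}) (b := 1) ENNReal.one_ne_top prob_le_one
    simpa using h1
  set c : ℝ := Real.log (1 / Mr) with hcdef
  have hceq : c = -Real.log Mr := by rw [hcdef, one_div, Real.log_inv]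
  have hc0 : 0 ≤ c := by
    rw [hceq]
    simpa using Real.log_nonpos hMrpos.le hMrle1
  have hlt0 : pr {h | f h < m} = 0 := by
    have := ae_iff.mp hae
    simpa [not_le] using this
  have hle_eq : pr {g | f g ≤ m} = pr {g | f g = m} := by
    apply le_antisymm
    · calc pr {g | f g ≤ m} ≤ pr ({g | f g = m} ∪ {g | f g < m}) :=
            measure_mono (fun g hg => hg.lt_or_eq.symm.imp id id)
        _ ≤ pr {g | f g = m} + pr {g | f g < m} := measure_union_le _ _
        _ = pr {g | f g = m} := by rw [hlt0, add_zero]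
    · exact measure_mono fun g hg => le_of_eq hg
  have hphm : (pr {g | f g ≤ m}).toReal = Mr := by rw [hle_eq]
  have hphimono : ∀ r1 r2 : ℝ, r1 ≤ r2 →
      (pr {g | f g ≤ r1}).toReal ≤ (pr {g | f g ≤ r2}).toReal := fun r1 r2 h12 =>
    ENNReal.toReal_mono (measure_ne_top _ _) (measure_mono fun g hg => le_trans hg h12)
  have hphile1 : ∀ r : ℝ, (pr {g | f g ≤ r}).toReal ≤ 1 := by
    intro r
    have h1 := ENNReal.toReal_mono (a := pr {g | f g ≤ r}) (b := 1) ENNReal.one_ne_top prob_le_one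
    simpa using h1
  -- choose δ
  obtain ⟨δ, hδpos, hδ⟩ : ∃ δ : ℝ, 0 < δ ∧ (pr {g | f g ≤ m + δ}).toReal < Mr * Real.exp η := by
    have hanti : Antitone (fun k : ℕ => {g | f g ≤ m + 1 / ((k : ℝ) + 1)}) := by
      intro k k' hkk' g hg
      have hc : ((k : ℝ)) ≤ (k' : ℝ) := Nat.cast_le.mpr hkk'
      have h1 : (1 : ℝ) / ((k' : ℝ) + 1) ≤ 1 / ((k : ℝ) + 1) :=
        one_div_le_one_div_of_le (by positivity) (by linarith)
      have hg' : f g ≤ m + 1 / ((k' : ℝ) + 1) := hg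
      show f g ≤ m + 1 / ((k : ℝ) + 1)
      linarith
    have hInter : ⋂ k : ℕ, {g | f g ≤ m + 1 / ((k : ℝ) + 1)} = {g | f g ≤ m} := by
      ext g
      simp only [Set.mem_iInter, Set.mem_setOf_eq]
      constructor
      · intro hg
        by_contra hlt
        push_neg at hlt
        obtain ⟨k, hk⟩ := exists_nat_one_div_lt (sub_pos.mpr hlt)
        have := hg k
        linarith
      · intro hg k
        have h1 : (0 : ℝ) < 1 / ((k : ℝ) + 1) := by positivity
        linarith
    have hseq : Tendsto (fun k : ℕ => pr {g | f g ≤ m + 1 / ((k : ℝ) + 1)}) atTop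
        (nhds (pr {g | f g = m})) := by
      have h1 := tendsto_measure_iInter_atTop (μ := pr)
        (s := fun k : ℕ => {g | f g ≤ m + 1 / ((k : ℝ) + 1)})
        (fun k => (hfm measurableSet_Iic).nullMeasurableSet) hanti ⟨0, measure_ne_top _ _⟩
      rw [hInter, hle_eq] at h1
      exact h1
    have hseq' : Tendsto (fun k : ℕ => (pr {g | f g ≤ m + 1 / ((k : ℝ) + 1)}).toReal) atTop
        (nhds Mr) := (ENNReal.tendsto_toReal hMne).comp hseq
    have hlt : Mr < Mr * Real.exp η := by
      nlinarith [Real.one_lt_exp_iff.mpr hη]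
    obtain ⟨k, hk⟩ := (hseq'.eventually_lt_const hlt).exists
    exact ⟨1 / ((k : ℝ) + 1), by positivity, hk⟩
  set β₀ : ℝ := max 1 (c / δ) with hβ₀def
  have hβ₀pos : (0 : ℝ) < β₀ := lt_of_lt_of_le one_pos (le_max_left _ _)
  -- Lam bound on the minimizing set
  have hLam : ∀ β : ℝ, β₀ ≤ β → ∀ h : H, f h = m →
      |sInf {v : ℝ | ∃ r : ℝ, 0 < (pr {g | f g ≤ f h + r}).toReal ∧
        v = β * r + Real.log (1 / (pr {g | f g ≤ f h + r}).toReal)} - c| ≤ η := by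
    intro β hβ h hh
    have hβ1 : (1 : ℝ) ≤ β := le_trans (le_max_left _ _) hβ
    have hβcδ : c / δ ≤ β := le_trans (le_max_right _ _) hβ
    have hβδ : c ≤ β * δ := by
      rw [div_le_iff₀ hδpos] at hβcδ
      linarith
    rw [hh]
    set S : Set ℝ := {v : ℝ | ∃ r : ℝ, 0 < (pr {g | f g ≤ m + r}).toReal ∧
        v = β * r + Real.log (1 / (pr {g | f g ≤ m + r}).toReal)} with hSdef
    have hmemc : c ∈ S := by
      refine ⟨0, ?_, ?_⟩
      · rw [add_zero, hphm]; exact hMrpos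
      · rw [add_zero, hphm]; ring
    have hlb : ∀ v ∈ S, c - η ≤ v := by
      rintro v ⟨r, hr0, hveq⟩
      have hrnn : 0 ≤ r := by
        by_contra hr
        push_neg at hr
        have hnull : pr {g | f g ≤ m + r} = 0 :=
          measure_mono_null (fun g hg => show f g < m by
            have : (r : ℝ) < 0 := hr
            exact lt_of_le_of_lt hg (by linarith)) hlt0
        rw [hnull] at hr0
        simp at hr0
      have hlog0 : 0 ≤ Real.log (1 / (pr {g | f g ≤ m + r}).toReal) :=
        Real.log_nonneg (one_le_one_div hr0 (hphile1 _))
      rcases le_or_gt r δ with hrδ | hrδ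
      · have hφle : (pr {g | f g ≤ m + r}).toReal < Mr * Real.exp η :=
          lt_of_le_of_lt (hphimono _ _ (by linarith)) hδ
        have hlog : Real.log (1 / (Mr * Real.exp η)) ≤
            Real.log (1 / (pr {g | f g ≤ m + r}).toReal) := by
          apply Real.log_le_log (by positivity)
          exact one_div_le_one_div_of_le hr0 hφle.le
        have hlogval : Real.log (1 / (Mr * Real.exp η)) = c - η := by
          rw [one_div, Real.log_inv, Real.log_mul hMrpos.ne' (Real.exp_pos _).ne',
            Real.log_exp, hceq]
          ring
        have hβr : 0 ≤ β * r := mul_nonneg (by linarith) hrnn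
        rw [hveq]
        linarith [hlogval ▸ hlog]
      · have hβr : β * δ ≤ β * r := mul_le_mul_of_nonneg_left hrδ.le (by linarith)
        rw [hveq]
        linarith
    have hne : S.Nonempty := ⟨c, hmemc⟩
    have hbdd : BddBelow S := ⟨c - η, fun v hv => hlb v hv⟩
    have h1 : sInf S ≤ c := csInf_le hbdd hmemc
    have h2 : c - η ≤ sInf S := le_csInf hne hlb
    rw [abs_le]
    constructor <;> linarith
  -- measurability
  have hSgt : MeasurableSet {h : H | m < f h} := hfm measurableSet_Ioi
  -- integrability and partition function bound
  have hexpmeas : ∀ β : ℝ, Measurable fun h => Real.exp (-β * f h) := fun β =>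
    (hfm.const_mul (-β)).exp
  have hint : ∀ β : ℝ, 0 ≤ β → Integrable (fun h => Real.exp (-β * f h)) pr := by
    intro β hβ
    apply Integrable.mono' (integrable_const 1) (hexpmeas β).aestronglyMeasurable
    filter_upwards with h
    rw [Real.norm_eq_abs, abs_of_pos (Real.exp_pos _)]
    rw [Real.exp_le_one_iff]
    nlinarith [hfnn h]
  have hZ : ∀ β : ℝ, 0 ≤ β →
      Real.exp (-β * m) * Mr ≤ ∫ g, Real.exp (-β * f g) ∂pr := by
    intro β hβ
    have hms : MeasurableSet {g : H | f g = m} := hfm (measurableSet_singleton m)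
    have hind : ∫ h, Set.indicator {g | f g = m} (fun _ => Real.exp (-β * m)) h ∂pr
        = Real.exp (-β * m) * Mr := by
      rw [MeasureTheory.integral_indicator_const _ hms, smul_eq_mul, hMrdef]
      exact mul_comm _ _
    rw [← hind]
    apply integral_mono ((integrable_const (Real.exp (-β * m))).indicator hms) (hint β hβ)
    intro h
    by_cases hh : f h = m
    · simp only [Set.indicator_of_mem (show h ∈ {g | f g = m} from hh), hh, le_refl]
    · simp only [Set.indicator_of_notMem (show h ∉ {g | f g = m} from hh)]
      exact (Real.exp_pos _).le
  have hZpos : ∀ β : ℝ, 0 ≤ β → 0 < ∫ g, Real.exp (-β * f g) ∂pr := fun β hβ =>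
    lt_of_lt_of_le (by positivity) (hZ β hβ)
  -- the dominating integral
  set I : ℝ → ℝ≥0∞ := fun β =>
    ∫⁻ h in {h : H | m < f h}, ENNReal.ofReal (Real.exp (-β * (f h - m))) ∂pr with hIdef
  -- gibbs bound
  have hgbnd : ∀ β : ℝ, β₀ ≤ β →
      pr.withDensity (fun h => ENNReal.ofReal (Real.exp (-β * f h) /
          ∫ g, Real.exp (-β * f g) ∂pr))
        {h | η < |sInf {v : ℝ | ∃ r : ℝ, 0 < (pr {g | f g ≤ f h + r}).toReal ∧
            v = β * r + Real.log (1 / (pr {g | f g ≤ f h + r}).toReal)} - c|}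
      ≤ ENNReal.ofReal Mr⁻¹ * I β := by
    intro β hβ
    have hβ0 : (0 : ℝ) ≤ β := le_trans hβ₀pos.le hβ
    set G : Measure H := pr.withDensity (fun h => ENNReal.ofReal (Real.exp (-β * f h) /
        ∫ g, Real.exp (-β * f g) ∂pr)) with hGdef
    have hsub : {h : H | η < |sInf {v : ℝ | ∃ r : ℝ, 0 < (pr {g | f g ≤ f h + r}).toReal ∧
            v = β * r + Real.log (1 / (pr {g | f g ≤ f h + r}).toReal)} - c|}
        ⊆ {h : H | m < f h} ∪ {h : H | f h < m} := by
      intro h hh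
      rcases lt_trichotomy (f h) m with h1 | h1 | h1
      · exact Or.inr h1
      · exact absurd hh (not_lt.mpr (hLam β hβ h h1))
      · exact Or.inl h1
    have hnull : G {h : H | f h < m} = 0 := withDensity_absolutelyContinuous pr _ hlt0
    have hstep : G {h : H | m < f h} ≤ ENNReal.ofReal Mr⁻¹ * I β := by
      rw [hGdef, withDensity_apply _ hSgt]
      have hpt : ∀ h : H, ENNReal.ofReal (Real.exp (-β * f h) / ∫ g, Real.exp (-β * f g) ∂pr)
          ≤ ENNReal.ofReal Mr⁻¹ * ENNReal.ofReal (Real.exp (-β * (f h - m))) := by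
        intro h
        have hZb := hZ β hβ0
        have hD : (0 : ℝ) < Real.exp (-β * m) * Mr := by positivity
        have h1 : Real.exp (-β * f h) / (∫ g, Real.exp (-β * f g) ∂pr)
            ≤ Real.exp (-β * f h) / (Real.exp (-β * m) * Mr) := by
          apply div_le_div_of_nonneg_left (Real.exp_pos _).le hD hZb
        have h2 : Real.exp (-β * f h) / (Real.exp (-β * m) * Mr)
            = Mr⁻¹ * Real.exp (-β * (f h - m)) := by
          rw [div_mul_eq_div_div, ← Real.exp_sub]
          have : -β * f h - -β * m = -β * (f h - m) := by ring
          rw [this, div_eq_mul_inv]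
          ring
        calc ENNReal.ofReal (Real.exp (-β * f h) / ∫ g, Real.exp (-β * f g) ∂pr)
            ≤ ENNReal.ofReal (Mr⁻¹ * Real.exp (-β * (f h - m))) := by
              rw [← h2]; exact ENNReal.ofReal_le_ofReal h1
          _ = ENNReal.ofReal Mr⁻¹ * ENNReal.ofReal (Real.exp (-β * (f h - m))) :=
              ENNReal.ofReal_mul (by positivity)
      calc ∫⁻ h in {h : H | m < f h}, ENNReal.ofReal (Real.exp (-β * f h) /
              ∫ g, Real.exp (-β * f g) ∂pr) ∂pr
          ≤ ∫⁻ h in {h : H | m < f h},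
              ENNReal.ofReal Mr⁻¹ * ENNReal.ofReal (Real.exp (-β * (f h - m))) ∂pr :=
            lintegral_mono fun h => hpt h
        _ = ENNReal.ofReal Mr⁻¹ * I β := by
            rw [hIdef]
            exact lintegral_const_mul' _ _ ENNReal.ofReal_ne_top
    calc G {h : H | η < |sInf {v : ℝ | ∃ r : ℝ, 0 < (pr {g | f g ≤ f h + r}).toReal ∧
            v = β * r + Real.log (1 / (pr {g | f g ≤ f h + r}).toReal)} - c|}
        ≤ G ({h : H | m < f h} ∪ {h : H | f h < m}) := measure_mono hsub
      _ ≤ G {h : H | m < f h} + G {h : H | f h < m} := measure_union_le _ _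
      _ = G {h : H | m < f h} := by rw [hnull, add_zero]
      _ ≤ ENNReal.ofReal Mr⁻¹ * I β := hstep
  -- I tends to zero along ℕ
  have hIseq : Tendsto (fun k : ℕ => I (k : ℝ)) atTop (nhds 0) := by
    have h0 : (0 : ℝ≥0∞) = ∫⁻ _ in {h : H | m < f h}, 0 ∂pr := by simp
    rw [h0]
    apply tendsto_lintegral_of_dominated_convergence (fun _ => (1 : ℝ≥0∞))
    · intro k
      exact ENNReal.measurable_ofReal.comp ((hfm.sub_const m).const_mul (-(k : ℝ))).exp
    · intro k
      filter_upwards [ae_restrict_mem hSgt] with h hh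
      rw [← ENNReal.ofReal_one]
      apply ENNReal.ofReal_le_ofReal
      rw [Real.exp_le_one_iff]
      have : m < f h := hh
      nlinarith [Nat.cast_nonneg (α := ℝ) k]
    · simp
    · filter_upwards [ae_restrict_mem hSgt] with h hh
      have hpos' : 0 < f h - m := sub_pos.mpr hh
      have h1 : Tendsto (fun k : ℕ => (k : ℝ) * (f h - m)) atTop atTop :=
        (tendsto_natCast_atTop_atTop (R := ℝ)).atTop_mul_const hpos'
      have h2 : Tendsto (fun k : ℕ => -((k : ℝ) * (f h - m))) atTop atBot :=
        tendsto_neg_atTop_atBot.comp h1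
      have h3 : Tendsto (fun k : ℕ => Real.exp (-((k : ℝ) * (f h - m)))) atTop (nhds 0) :=
        Real.tendsto_exp_atBot.comp h2
      have h4 := (ENNReal.tendsto_ofReal h3)
      simpa [neg_mul] using h4
  -- I is eventually small
  have hImono : ∀ k : ℕ, ∀ β : ℝ, (k : ℝ) ≤ β → I β ≤ I (k : ℝ) := by
    intro k β hkβ
    rw [hIdef]
    apply lintegral_mono_ae
    filter_upwards [ae_restrict_mem hSgt] with h hh
    apply ENNReal.ofReal_le_ofReal
    apply Real.exp_le_exp.mpr
    have : m < f h := hh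
    nlinarith
  -- conclusion
  rw [ENNReal.tendsto_nhds_zero]
  intro ε hε
  set C : ℝ≥0∞ := ENNReal.ofReal Mr⁻¹ with hCdef
  have hCne : C ≠ ⊤ := ENNReal.ofReal_ne_top
  have hCpos : 0 < C := ENNReal.ofReal_pos.mpr (by positivity)
  have hε' : 0 < ε / C := ENNReal.div_pos hε.ne' hCne
  obtain ⟨k, hk⟩ := ((ENNReal.tendsto_nhds_zero.mp hIseq) (ε / C) hε').exists
  filter_upwards [eventually_ge_atTop β₀, eventually_ge_atTop (k : ℝ)] with β hβ1 hβ2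
  calc pr.withDensity _ _ ≤ C * I β := hgbnd β hβ1
    _ ≤ C * I (k : ℝ) := mul_le_mul_of_nonneg_left (hImono k β hβ2) zero_le
    _ ≤ C * (ε / C) := mul_le_mul_of_nonneg_left hk zero_le
    _ ≤ ε := ENNReal.mul_div_le


theorem statement11
    (pr : Measure H) [IsProbabilityMeasure pr]
    (ℓ : H → X → ℝ) (hmeas : Measurable (Function.uncurry ℓ))
    (hnn : ∀ h z, 0 ≤ ℓ h z)
    (n : ℕ) (hn : 0 < n) (x : Fin n → X)
    (hpos : 0 < pr {h | empLoss ℓ n h x = essInf (fun g => empLoss ℓ n g x) pr}) :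
    ∀ η : ℝ, 0 < η →
      Filter.Tendsto
        (fun β : ℝ => gibbs ℓ pr n β x
          {h | η < |Lam ℓ pr n β h x -
            Real.log (1 / (pr {g | empLoss ℓ n g x =
              essInf (fun g' => empLoss ℓ n g' x) pr}).toReal)|})
        Filter.atTop (nhds 0) := by
  intro η hη
  have hfm : Measurable fun h : H => empLoss ℓ n h x := by
    have hsum : Measurable fun h : H => ∑ i, ℓ h (x i) :=
      Finset.univ.measurable_sum fun i _ =>
        hmeas.comp (measurable_id.prodMk measurable_const)
    exact hsum.div_const _
  have hfnn : ∀ h : H, 0 ≤ empLoss ℓ n h x := fun h =>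
    div_nonneg (Finset.sum_nonneg fun i _ => hnn h (x i)) (Nat.cast_nonneg n)
  have hbdd : Filter.IsBoundedUnder (· ≥ ·) (ae pr) fun h : H => empLoss ℓ n h x :=
    Filter.isBoundedUnder_of ⟨0, fun h => hfnn h⟩
  have hae : ∀ᵐ h ∂pr,
      essInf (fun g => empLoss ℓ n g x) pr ≤ empLoss ℓ n h x := ae_essInf_le hbdd
  exact aux_statement11 pr (fun h : H => empLoss ℓ n h x) hfm hfnn
    (essInf (fun g => empLoss ℓ n g x) pr) hae hpos η hη
end
end

section
/- Assume the loss ℓ has values in [0,1]. Let δ > 0, p ∈ ℕ, and s(n,δ,p) = √( ln((1+n^{2p+1})/δ) / (2n) ). Then with probability at least 1 − δ in x ∼ μ^n, for all r ∈ ℝ: φ̂(r + s(n,δ,p), x) ≥ φ(r) − n^{−p} s(n,δ,p). -/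
open MeasureTheory Real Filter

noncomputable section

variable {H X : Type*} [MeasurableSpace H] [MeasurableSpace X]

/-- Key scalar inequality behind Hoeffding's lemma. -/
lemma hoeff_scalar {m : ℝ} (hm0 : 0 ≤ m) (hm1 : m ≤ 1) (t : ℝ) :
    (1 - m + m * exp t) * exp (-(t * m)) ≤ exp (t ^ 2 / 8) := by
  set u : ℝ → ℝ := fun t => 1 - m + m * exp t with hu_def
  have hu : ∀ s : ℝ, 0 < u s := by
    intro s
    have he := exp_pos s
    rcases eq_or_lt_of_le hm0 with h | h
    · simp [hu_def, ← h]
    · have : 0 < m * exp s := mul_pos h he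
      simp only [hu_def]; nlinarith
  set q : ℝ → ℝ := fun s => m * exp s / u s with hq_def
  have hq0 : ∀ s, 0 ≤ q s := fun s =>
    div_nonneg (mul_nonneg hm0 (exp_pos s).le) (hu s).le
  have hq1 : ∀ s, q s ≤ 1 := by
    intro s
    rw [hq_def, div_le_one (hu s)]
    simp only [hu_def]; linarith
  set L : ℝ → ℝ := fun s => -(s * m) + log (u s) with hL_def
  have huder : ∀ s, HasDerivAt u (m * exp s) s := by
    intro s
    exact ((Real.hasDerivAt_exp s).const_mul m).const_add (1 - m)
  have hLder : ∀ s, HasDerivAt L (-m + q s) s := by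
    intro s
    have h1 : HasDerivAt (fun s : ℝ => -(s * m)) (-m) s := by
      exact (hasDerivAt_mul_const m).neg
    exact h1.add ((huder s).log (hu s).ne')
  have hqder : ∀ s, HasDerivAt q (q s * (1 - q s)) s := by
    intro s
    have h := ((Real.hasDerivAt_exp s).const_mul m).div (huder s) (hu s).ne'
    refine h.congr_deriv ?_
    have hne : (1 - m + m * exp s) ≠ 0 := (hu s).ne'
    simp only [hq_def, hu_def]
    field_simp
  set g : ℝ → ℝ := fun s => s ^ 2 / 8 - L s with hg_def
  set G : ℝ → ℝ := fun s => s / 4 - (-m + q s) with hG_def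
  have hgder : ∀ s, HasDerivAt g (G s) s := by
    intro s
    have h1 : HasDerivAt (fun s : ℝ => s ^ 2 / 8) (s / 4) s := by
      have := (hasDerivAt_pow 2 s).div_const 8
      exact this.congr_deriv (by push_cast; ring)
    exact h1.sub (hLder s)
  have hGder : ∀ s, HasDerivAt G (1 / 4 - q s * (1 - q s)) s := by
    intro s
    have h1 : HasDerivAt (fun s : ℝ => s / 4) (1 / 4) s := (hasDerivAt_id s).div_const 4
    exact h1.sub ((hqder s).const_add (-m))
  have hG0 : G 0 = 0 := by
    simp [hG_def, hq_def, hu_def]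
  have hGmono : Monotone G := by
    apply monotone_of_deriv_nonneg
    · exact fun s => (hGder s).differentiableAt
    · intro s
      rw [(hGder s).deriv]
      nlinarith [sq_nonneg (q s - 1 / 2)]
  have hg0 : g 0 = 0 := by
    simp [hg_def, hL_def, hu_def]
  have key : ∀ s, 0 ≤ g s := by
    intro s
    rcases le_total 0 s with h | h
    · have : MonotoneOn g (Set.Ici (0 : ℝ)) := by
        apply monotoneOn_of_deriv_nonneg (convex_Ici 0)
        · exact (Differentiable.continuous (fun s => (hgder s).differentiableAt)).continuousOn
        · exact fun s _ => (hgder s).differentiableAt.differentiableWithinAt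
        · intro s hs
          rw [(hgder s).deriv]
          rw [interior_Ici] at hs
          have hs0 : (0:ℝ) ≤ s := le_of_lt hs
          calc (0:ℝ) = G 0 := hG0.symm
            _ ≤ G s := hGmono hs0
      have := this (Set.self_mem_Ici) (Set.mem_Ici.mpr h) h
      linarith [hg0 ▸ this]
    · have : AntitoneOn g (Set.Iic (0 : ℝ)) := by
        apply antitoneOn_of_deriv_nonpos (convex_Iic 0)
        · exact (Differentiable.continuous (fun s => (hgder s).differentiableAt)).continuousOn
        · exact fun s _ => (hgder s).differentiableAt.differentiableWithinAt
        · intro s hs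
          rw [(hgder s).deriv]
          rw [interior_Iic] at hs
          have hs0 : s ≤ 0 := le_of_lt hs
          calc G s ≤ G 0 := hGmono hs0
            _ = 0 := hG0
      have := this (Set.mem_Iic.mpr h) Set.self_mem_Iic h
      linarith [hg0 ▸ this]
  have hLle : L t ≤ t ^ 2 / 8 := by have := key t; simp only [hg_def] at this; linarith
  have : exp (L t) ≤ exp (t ^ 2 / 8) := exp_le_exp.mpr hLle
  calc (1 - m + m * exp t) * exp (-(t * m)) = exp (L t) := by
        rw [hL_def]; simp only
        rw [exp_add, exp_log (hu t)]
        ring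
    _ ≤ exp (t ^ 2 / 8) := this

lemma hoeff_mgf {Ω : Type*} [MeasurableSpace Ω] (ν : Measure Ω) [IsProbabilityMeasure ν]
    (Z : Ω → ℝ) (hZm : Measurable Z) (hZ : ∀ ω, Z ω ∈ Set.Icc (0:ℝ) 1) (t : ℝ) :
    ∫ ω, exp (t * (Z ω - ∫ z, Z z ∂ν)) ∂ν ≤ exp (t ^ 2 / 8) := by
  set m := ∫ z, Z z ∂ν with hm_def
  have hZi : Integrable Z ν := by
    refine Integrable.mono' (integrable_const 1) hZm.aestronglyMeasurable ?_
    exact ae_of_all _ fun ω => by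
      rw [Real.norm_eq_abs, abs_le]; exact ⟨by linarith [(hZ ω).1], (hZ ω).2⟩
  have hm0 : 0 ≤ m := integral_nonneg fun ω => (hZ ω).1
  have hm1 : m ≤ 1 := by
    calc m ≤ ∫ _, (1:ℝ) ∂ν := integral_mono hZi (integrable_const 1) fun ω => (hZ ω).2
      _ = 1 := by simp
  have hpt : ∀ ω, exp (t * (Z ω - m)) ≤ (1 - Z ω + Z ω * exp t) * exp (-(t * m)) := by
    intro ω
    have hz := hZ ω
    have hconv := convexOn_exp.2 (Set.mem_univ (0:ℝ)) (Set.mem_univ t)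
      (by linarith [hz.2] : (0:ℝ) ≤ 1 - Z ω) hz.1 (by ring)
    simp only [smul_eq_mul, mul_zero, zero_add, exp_zero, mul_one] at hconv
    have : exp (t * (Z ω - m)) = exp (Z ω * t) * exp (-(t * m)) := by
      rw [← exp_add]; ring_nf
    rw [this]
    exact mul_le_mul_of_nonneg_right hconv (exp_pos _).le
  have hlhs_i : Integrable (fun ω => exp (t * (Z ω - m))) ν := by
    refine Integrable.mono' (integrable_const (exp |t|))
      (((hZm.sub_const m).const_mul t).exp.aestronglyMeasurable) ?_
    refine ae_of_all _ fun ω => ?_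
    rw [Real.norm_eq_abs, abs_of_pos (exp_pos _)]
    apply exp_le_exp.mpr
    have hz := hZ ω
    calc t * (Z ω - m) ≤ |t * (Z ω - m)| := le_abs_self _
      _ = |t| * |Z ω - m| := abs_mul _ _
      _ ≤ |t| * 1 := by
          apply mul_le_mul_of_nonneg_left _ (abs_nonneg t)
          rw [abs_le]; constructor <;> [linarith [hz.1]; linarith [hz.2]]
      _ = |t| := mul_one _
  have hrhs_i : Integrable (fun ω => (1 - Z ω + Z ω * exp t) * exp (-(t * m))) ν := by
    apply Integrable.mul_const
    exact ((integrable_const (1:ℝ)).sub hZi).add (hZi.mul_const _)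
  calc ∫ ω, exp (t * (Z ω - m)) ∂ν
      ≤ ∫ ω, (1 - Z ω + Z ω * exp t) * exp (-(t * m)) ∂ν :=
        integral_mono hlhs_i hrhs_i hpt
    _ = (1 - m + m * exp t) * exp (-(t * m)) := by
        rw [integral_mul_const]
        congr 1
        have : ∫ a, (1 - Z a + Z a * exp t) ∂ν
            = (∫ a, (1 - Z a) ∂ν) + ∫ a, Z a * exp t ∂ν :=
          integral_add ((integrable_const (1:ℝ)).sub hZi) (hZi.mul_const _)
        rw [this, integral_sub (integrable_const 1) hZi, integral_mul_const, integral_const]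
        simp [hm_def]
    _ ≤ exp (t ^ 2 / 8) := hoeff_scalar hm0 hm1 t

lemma hoeff_pi {X : Type*} [MeasurableSpace X] (ν : Measure X) [IsProbabilityMeasure ν]
    (f : X → ℝ) (hf : Measurable f) (hb : ∀ z, f z ∈ Set.Icc (0:ℝ) 1)
    (n : ℕ) (hn : 0 < n) (s : ℝ) (hs : 0 ≤ s) :
    (Measure.pi fun _ : Fin n => ν) {x | (∫ z, f z ∂ν) + s < (∑ i, f (x i)) / n} ≤
      ENNReal.ofReal (exp (-(2 * n * s ^ 2))) := by
  letI : MeasureSpace X := ⟨ν⟩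
  haveI : IsProbabilityMeasure (volume : Measure X) := ‹_›
  set m := ∫ z, f z ∂ν with hm_def
  set t : ℝ := 4 * s with ht_def
  have ht : 0 ≤ t := by positivity
  set Y : (Fin n → X) → ℝ := fun x => ∑ i, (f (x i) - m) with hY_def
  have hμpi : (Measure.pi fun _ : Fin n => ν) = (volume : Measure (Fin n → X)) := by
    rw [volume_pi]; rfl
  -- each factor is integrable
  have hfac : Integrable (fun z : X => exp (t * (f z - m))) volume := by
    refine Integrable.mono' (integrable_const (exp |t|))
      (((hf.sub_const m).const_mul t).exp.aestronglyMeasurable) ?_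
    refine ae_of_all _ fun z => ?_
    rw [Real.norm_eq_abs, abs_of_pos (exp_pos _)]
    apply exp_le_exp.mpr
    have hm0 : 0 ≤ m := integral_nonneg fun ω => (hb ω).1
    have hm1 : m ≤ 1 := by
      have hfi : Integrable f ν := by
        refine Integrable.mono' (integrable_const 1) hf.aestronglyMeasurable ?_
        exact ae_of_all _ fun ω => by
          rw [Real.norm_eq_abs, abs_le]; exact ⟨by linarith [(hb ω).1], (hb ω).2⟩
      calc m ≤ ∫ _, (1:ℝ) ∂ν := integral_mono hfi (integrable_const 1) fun ω => (hb ω).2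
        _ = 1 := by simp
    have hz := hb z
    calc t * (f z - m) ≤ |t * (f z - m)| := le_abs_self _
      _ = |t| * |f z - m| := abs_mul _ _
      _ ≤ |t| * 1 := by
          apply mul_le_mul_of_nonneg_left _ (abs_nonneg t)
          rw [abs_le]; constructor <;> [linarith [hz.1]; linarith [hz.2]]
      _ = |t| := mul_one _
  have hexp_prod : ∀ x : Fin n → X, exp (t * Y x) = ∏ i, exp (t * (f (x i) - m)) := by
    intro x
    rw [hY_def, Finset.mul_sum, Real.exp_sum]
  have h_int : Integrable (fun x : Fin n → X => exp (t * Y x)) volume := by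
    simp only [hexp_prod]
    exact Integrable.fintype_prod (f := fun _ z => exp (t * (f z - m))) fun i => hfac
  have hmgf_le : ProbabilityTheory.mgf Y volume t ≤ exp (2 * n * s ^ 2) := by
    have h1 : ProbabilityTheory.mgf Y volume t = (∫ z, exp (t * (f z - m)) ∂ν) ^ n := by
      rw [ProbabilityTheory.mgf]
      calc ∫ x : Fin n → X, exp (t * Y x) = ∫ x : Fin n → X, ∏ i, exp (t * (f (x i) - m)) := by
            simp only [hexp_prod]
        _ = (∫ z, exp (t * (f z - m)) ∂ν) ^ n := by
            rw [← hμpi, integral_fintype_prod_eq_pow (fun z => exp (t * (f z - m)))]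
            simp only [Fintype.card_fin]
    rw [h1]
    have h2 : (∫ z, exp (t * (f z - m)) ∂ν) ≤ exp (t ^ 2 / 8) :=
      hoeff_mgf ν f hf hb t
    calc (∫ z, exp (t * (f z - m)) ∂ν) ^ n ≤ (exp (t ^ 2 / 8)) ^ n := by
          apply pow_le_pow_left₀ _ h2
          exact integral_nonneg fun z => (exp_pos _).le
      _ = exp (n * (t ^ 2 / 8)) := by rw [← Real.exp_nat_mul]
      _ = exp (2 * n * s ^ 2) := by rw [ht_def]; ring_nf
  have hchern := ProbabilityTheory.measure_ge_le_exp_mul_mgf (X := Y) (μ := volume)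
    (n * s) ht h_int
  have hsub : {x : Fin n → X | m + s < (∑ i, f (x i)) / n} ⊆ {x | (n : ℝ) * s ≤ Y x} := by
    intro x hx
    simp only [Set.mem_setOf_eq] at hx ⊢
    have hn' : (0:ℝ) < n := Nat.cast_pos.mpr hn
    have h1 : (n : ℝ) * (m + s) < ∑ i, f (x i) := by
      rw [mul_comm]
      exact (lt_div_iff₀ hn').mp hx
    have h2 : Y x = (∑ i, f (x i)) - n * m := by
      show (∑ i : Fin n, (f (x i) - m)) = _
      rw [Finset.sum_sub_distrib]
      simp [Finset.card_univ, mul_comm]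
    rw [h2]; nlinarith
  rw [hμpi]
  calc (volume : Measure (Fin n → X)) {x | m + s < (∑ i, f (x i)) / n}
      ≤ volume {x | (n : ℝ) * s ≤ Y x} := measure_mono hsub
    _ ≤ ENNReal.ofReal (exp (-(2 * n * s ^ 2))) := by
        rw [← ENNReal.ofReal_toReal (measure_ne_top volume _)]
        apply ENNReal.ofReal_le_ofReal
        calc (volume {x | (n:ℝ) * s ≤ Y x}).toReal
            ≤ exp (-t * (n * s)) * ProbabilityTheory.mgf Y volume t := hchern
          _ ≤ exp (-t * (n * s)) * exp (2 * n * s ^ 2) := by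
              apply mul_le_mul_of_nonneg_left hmgf_le (exp_pos _).le
          _ = exp (-(2 * n * s ^ 2)) := by
              rw [← Real.exp_add, ht_def]; ring_nf

theorem statement12
    (μ : Measure X) [IsProbabilityMeasure μ]
    (pr : Measure H) [IsProbabilityMeasure pr]
    (ℓ : H → X → ℝ) (hmeas : Measurable (Function.uncurry ℓ))
    (hrange : ∀ h z, ℓ h z ∈ Set.Icc (0 : ℝ) 1)
    (n : ℕ) (hn : 0 < n) (δ : ℝ) (hδ : 0 < δ) (p : ℕ) :
    ENNReal.ofReal (1 - δ) ≤
      (Measure.pi fun _ : Fin n => μ) {x : Fin n → X | ∀ r : ℝ,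
        (pr {g | trueLoss ℓ μ g ≤ r}).toReal
            - ((n : ℝ) ^ p)⁻¹ * Real.sqrt (Real.log ((1 + (n : ℝ) ^ (2 * p + 1)) / δ) / (2 * n)) ≤
          phiHat ℓ pr n
            (r + Real.sqrt (Real.log ((1 + (n : ℝ) ^ (2 * p + 1)) / δ) / (2 * n))) x} := by
  by_cases hδ1 : 1 ≤ δ
  · rw [ENNReal.ofReal_eq_zero.mpr (by linarith)]
    exact bot_le
  push_neg at hδ1
  set N : ℝ := (n : ℝ) ^ (2 * p + 1) with hN_def
  set s : ℝ := Real.sqrt (Real.log ((1 + N) / δ) / (2 * n)) with hs_def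
  set ε : ℝ := ((n : ℝ) ^ p)⁻¹ * s with hε_def
  have hn' : (0:ℝ) < n := Nat.cast_pos.mpr hn
  have hn1 : (1:ℝ) ≤ n := by exact_mod_cast hn
  have hN1 : 1 ≤ N := one_le_pow₀ hn1
  have hnp : (0:ℝ) < (n:ℝ) ^ p := by positivity
  have hK1 : 1 < (1 + N) / δ := (one_lt_div hδ).mpr (by linarith)
  have hlogK : 0 < Real.log ((1 + N) / δ) := Real.log_pos hK1
  have hs_pos : 0 < s := Real.sqrt_pos.mpr (by positivity)
  have hs2 : s ^ 2 = Real.log ((1 + N) / δ) / (2 * n) :=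
    Real.sq_sqrt (by positivity)
  have hexp : exp (-(2 * n * s ^ 2)) = δ / (1 + N) := by
    rw [hs2]
    have : -(2 * (n:ℝ) * (Real.log ((1 + N) / δ) / (2 * n))) = -Real.log ((1 + N) / δ) := by
      field_simp
    rw [this, Real.exp_neg, Real.exp_log (by positivity), inv_div]
  -- key arithmetic: 1/(1+N) ≤ ε
  have hlog2 : (1:ℝ)/2 ≤ Real.log (1 + N) := by
    have h2 : (2:ℝ) ≤ 1 + N := by linarith
    have := Real.log_le_log (by norm_num) h2
    linarith [Real.log_two_gt_d9]
  have hkey : 1 / (1 + N) ≤ ε := by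
    have hNe : ((n:ℝ) ^ p) ^ 2 * n = N := by
      rw [hN_def, ← pow_mul, ← pow_succ, mul_comm p 2]
    have hsq : ((n:ℝ) ^ p / (1 + N)) ^ 2 ≤ Real.log (1 + N) / (2 * n) := by
      rw [div_pow, div_le_div_iff₀ (by positivity) (by positivity)]
      nlinarith [sq_nonneg (1 - N), hlog2, hN1]
    have h1 : (n:ℝ) ^ p / (1 + N) ≤ Real.sqrt (Real.log (1 + N) / (2 * n)) := by
      rw [Real.le_sqrt (by positivity)]
      · exact hsq
      · exact div_nonneg (by linarith) (by positivity)
    have h2 : Real.sqrt (Real.log (1 + N) / (2 * n)) ≤ s := by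
      apply Real.sqrt_le_sqrt
      gcongr
      rw [le_div_iff₀ hδ]
      nlinarith
    calc 1 / (1 + N) = ((n:ℝ) ^ p)⁻¹ * ((n:ℝ) ^ p / (1 + N)) := by
          field_simp
      _ ≤ ((n:ℝ) ^ p)⁻¹ * s := by
          apply mul_le_mul_of_nonneg_left _ (by positivity)
          exact h1.trans h2
  -- measurability
  have hε_pos : 0 < ε := by positivity
  set Pn := (Measure.pi fun _ : Fin n => μ) with hPn_def
  haveI : IsProbabilityMeasure Pn := by rw [hPn_def]; infer_instance
  have hemp_meas : Measurable (fun q : (Fin n → X) × H => empLoss ℓ n q.2 q.1) := by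
    apply Measurable.div_const
    apply Finset.measurable_sum
    intro i _
    exact hmeas.comp (measurable_snd.prodMk ((measurable_pi_apply i).comp measurable_fst))
  have htrue_meas : Measurable (trueLoss ℓ μ) :=
    (hmeas.stronglyMeasurable.integral_prod_right').measurable
  set S : Set ((Fin n → X) × H) :=
    {q | trueLoss ℓ μ q.2 + s < empLoss ℓ n q.2 q.1} with hS_def
  have hS : MeasurableSet S :=
    measurableSet_lt ((htrue_meas.comp measurable_snd).add_const s) hemp_meas
  set F : (Fin n → X) → ENNReal := fun x => pr (Prod.mk x ⁻¹' S) with hF_def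
  have hF : Measurable F := measurable_measure_prodMk_left hS
  -- expected bad mass
  have hlint : ∫⁻ x, F x ∂Pn ≤ ENNReal.ofReal (δ / (1 + N)) := by
    rw [show ∫⁻ x, F x ∂Pn = (Pn.prod pr) S from (Measure.prod_apply hS).symm,
      Measure.prod_apply_symm hS]
    have hbd : ∀ g : H, Pn ((fun x => (x, g)) ⁻¹' S) ≤ ENNReal.ofReal (δ / (1 + N)) := by
      intro g
      have hfg : Measurable (fun z => ℓ g z) :=
        hmeas.comp (measurable_prodMk_left)
      have := hoeff_pi μ (fun z => ℓ g z) hfg (hrange g) n hn s hs_pos.le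
      rw [hexp] at this
      exact this
    calc ∫⁻ g, Pn ((fun x => (x, g)) ⁻¹' S) ∂pr
        ≤ ∫⁻ _, ENNReal.ofReal (δ / (1 + N)) ∂pr := lintegral_mono hbd
      _ = ENNReal.ofReal (δ / (1 + N)) := by simp
  -- Markov
  have hmark : Pn {x | ENNReal.ofReal ε ≤ F x} ≤ ENNReal.ofReal δ := by
    have h := meas_ge_le_lintegral_div (μ := Pn) hF.aemeasurable
      (ne_of_gt (ENNReal.ofReal_pos.mpr hε_pos)) ENNReal.ofReal_ne_top
    calc Pn {x | ENNReal.ofReal ε ≤ F x}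
        ≤ (∫⁻ x, F x ∂Pn) / ENNReal.ofReal ε := h
      _ ≤ ENNReal.ofReal (δ / (1 + N)) / ENNReal.ofReal ε :=
          ENNReal.div_le_div_right hlint _
      _ ≤ ENNReal.ofReal δ := by
          apply ENNReal.div_le_of_le_mul
          rw [← ENNReal.ofReal_mul hδ.le]
          apply ENNReal.ofReal_le_ofReal
          calc δ / (1 + N) = δ * (1 / (1 + N)) := by ring
            _ ≤ δ * ε := mul_le_mul_of_nonneg_left hkey hδ.le
  -- good event
  set Gd : Set (Fin n → X) := {x | F x ≤ ENNReal.ofReal ε} with hGd_def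
  have hGd : MeasurableSet Gd := measurableSet_le hF measurable_const
  have hsub : Gd ⊆ {x : Fin n → X | ∀ r : ℝ,
      (pr {g | trueLoss ℓ μ g ≤ r}).toReal - ε ≤ phiHat ℓ pr n (r + s) x} := by
    intro x hx r
    have hAB : {g | trueLoss ℓ μ g ≤ r} ⊆
        {g | empLoss ℓ n g x ≤ r + s} ∪ (Prod.mk x ⁻¹' S) := by
      intro g hg
      by_cases hc : empLoss ℓ n g x ≤ r + s
      · exact Or.inl hc
      · right
        push_neg at hc
        simp only [hS_def, Set.mem_preimage, Set.mem_setOf_eq]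
        have : trueLoss ℓ μ g ≤ r := hg
        linarith
    have h1 : pr {g | trueLoss ℓ μ g ≤ r} ≤
        pr {g | empLoss ℓ n g x ≤ r + s} + ENNReal.ofReal ε := by
      calc pr {g | trueLoss ℓ μ g ≤ r}
          ≤ pr ({g | empLoss ℓ n g x ≤ r + s} ∪ (Prod.mk x ⁻¹' S)) := measure_mono hAB
        _ ≤ pr {g | empLoss ℓ n g x ≤ r + s} + pr (Prod.mk x ⁻¹' S) := measure_union_le _ _
        _ ≤ pr {g | empLoss ℓ n g x ≤ r + s} + ENNReal.ofReal ε := add_le_add_right hx _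
    have h2 := ENNReal.toReal_mono
      (ENNReal.add_ne_top.mpr ⟨measure_ne_top _ _, ENNReal.ofReal_ne_top⟩) h1
    rw [ENNReal.toReal_add (measure_ne_top _ _) ENNReal.ofReal_ne_top,
      ENNReal.toReal_ofReal hε_pos.le] at h2
    have : phiHat ℓ pr n (r + s) x = (pr {g | empLoss ℓ n g x ≤ r + s}).toReal := rfl
    linarith [this ▸ h2]
  have hcompl : Pn Gdᶜ ≤ ENNReal.ofReal δ := by
    refine le_trans (measure_mono ?_) hmark
    intro x hx
    simp only [hGd_def, Set.mem_compl_iff, Set.mem_setOf_eq, not_le] at hx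
    exact le_of_lt hx
  calc ENNReal.ofReal (1 - δ) = 1 - ENNReal.ofReal δ := by
        rw [ENNReal.ofReal_sub _ hδ.le, ENNReal.ofReal_one]
    _ ≤ Pn Gd := by
        rw [tsub_le_iff_right]
        calc (1 : ENNReal) = Pn Gd + Pn Gdᶜ := by
              have := measure_add_measure_compl (μ := Pn) hGd
              rw [measure_univ] at this
              exact this.symm
          _ ≤ Pn Gd + ENNReal.ofReal δ := add_le_add_right hcompl _
    _ ≤ _ := measure_mono hsub
end
end

section
/- Assume the loss ℓ has values in [0,1]. Let δ > 0, p ∈ ℕ, and s(n,δ,p) = √( ln((1+n^{2p+1})/δ) / (2n) ). Then with probability at least 1 − δ in x ∼ μ^n, for all r ∈ ℝ: φ(r + s(n,δ,p)) ≥ φ̂(r, x) − n^{−p} s(n,δ,p). -/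
open MeasureTheory Real Filter

noncomputable section

variable {H X : Type*} [MeasurableSpace H] [MeasurableSpace X]

open ProbabilityTheory in

private lemma gpos {q : ℝ} (hq0 : 0 ≤ q) (hq1 : q ≤ 1) (t : ℝ) :
    0 < 1 - q + q * exp t := by
  rcases le_or_gt (exp t) 1 with h | h
  · nlinarith [exp_pos t, mul_nonneg (sub_nonneg.2 hq1) (sub_nonneg.2 h)]
  · nlinarith [mul_le_mul_of_nonneg_left h.le hq0]

private lemma key_nonneg {q : ℝ} (hq0 : 0 ≤ q) (hq1 : q ≤ 1) {t : ℝ} (ht : 0 ≤ t) :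
    Real.log (1 - q + q * exp t) ≤ q * t + t ^ 2 / 8 := by
  set g : ℝ → ℝ := fun u => 1 - q + q * exp u with hg
  have hgpos : ∀ u, 0 < g u := fun u => gpos hq0 hq1 u
  have hgd : ∀ u, HasDerivAt g (q * exp u) u := by
    intro u
    exact (((Real.hasDerivAt_exp u).const_mul q).const_add (1 - q))
  -- k u = u/4 - (q * exp u / g u - q),  k' = 1/4 - q e^u (1-q)/g².
  set k : ℝ → ℝ := fun u => u / 4 - (q * exp u / g u - q) with hk
  have hkd : ∀ u, HasDerivAt k (1 / 4 - q * exp u * (1 - q) / (g u) ^ 2) u := by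
    intro u
    have h1 : HasDerivAt (fun u => q * exp u) (q * exp u) u :=
      (Real.hasDerivAt_exp u).const_mul q
    have h2 : HasDerivAt (fun u => q * exp u / g u)
        ((q * exp u * g u - q * exp u * (q * exp u)) / (g u) ^ 2) u :=
      h1.div (hgd u) (hgpos u).ne'
    have h3 : HasDerivAt (fun u => u / 4) (1 / 4) u := by
      simpa using (hasDerivAt_id u).div_const 4
    have h4 := h3.sub (h2.sub_const q)
    have : q * exp u * g u - q * exp u * (q * exp u) = q * exp u * (1 - q) := by
      simp only [hg]; ring
    rw [this] at h4
    exact h4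
  have hk0 : k 0 = 0 := by simp [hk, hg]
  have hkmono : Monotone k := by
    apply monotone_of_deriv_nonneg
    · exact fun u => (hkd u).differentiableAt
    · intro u
      rw [(hkd u).deriv]
      have hle : q * exp u * (1 - q) / (g u) ^ 2 ≤ 1 / 4 := by
        rw [div_le_iff₀ (pow_pos (hgpos u) 2)]
        simp only [hg]
        nlinarith [sq_nonneg (1 - q - q * exp u)]
      linarith
  -- so for u ≥ 0 : q e^u/g u - q ≤ u/4
  have hf'le : ∀ u, 0 ≤ u → q * exp u / g u - q ≤ u / 4 := by
    intro u hu
    have := hkmono hu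
    rw [hk0] at this
    simp only [hk] at this
    linarith
  -- F u = u²/8 - (log (g u) - q u), F' = u/4 - (q e^u/g u - q) ≥ 0 on [0,∞)
  set F : ℝ → ℝ := fun u => u ^ 2 / 8 - (Real.log (g u) - q * u) with hF
  have hFd : ∀ u, HasDerivAt F (u / 4 - (q * exp u / g u - q)) u := by
    intro u
    have h1 : HasDerivAt (fun u => Real.log (g u)) (q * exp u / g u) u :=
      (hgd u).log (hgpos u).ne'
    have h2 : HasDerivAt (fun u : ℝ => q * u) q u := by
      simpa using (hasDerivAt_id u).const_mul q
    have h3 : HasDerivAt (fun u : ℝ => u ^ 2 / 8) (u / 4) u := by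
      have := (hasDerivAt_pow 2 u).div_const 8
      rw [show u / 4 = ((2:ℕ):ℝ) * u ^ (2 - 1) / 8 by norm_num; ring]
      exact this
    exact h3.sub (h1.sub h2)
  have hF0 : F 0 = 0 := by simp [hF, hg]
  have hFmono : MonotoneOn F (Set.Ici (0 : ℝ)) := by
    apply monotoneOn_of_deriv_nonneg (convex_Ici 0)
    · exact (fun u _ => ((hFd u).differentiableAt).continuousAt.continuousWithinAt)
    · exact fun u _ => ((hFd u).differentiableAt).differentiableWithinAt
    · intro u hu
      rw [(hFd u).deriv]
      have := hf'le u (le_of_lt (by simpa using hu))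
      linarith
  have := hFmono Set.self_mem_Ici (by exact ht) ht
  rw [hF0] at this
  simp only [hF] at this
  linarith

lemma key_ineq {q : ℝ} (hq0 : 0 ≤ q) (hq1 : q ≤ 1) (t : ℝ) :
    Real.log (1 - q + q * exp t) ≤ q * t + t ^ 2 / 8 := by
  rcases le_or_gt 0 t with ht | ht
  · exact key_nonneg hq0 hq1 ht
  · have h := key_nonneg (q := 1 - q) (by linarith) (by linarith) (t := -t) (by linarith)
    have hpos : 0 < 1 - (1 - q) + (1 - q) * exp (-t) := gpos (by linarith) (by linarith) (-t)
    have hfact : 1 - q + q * exp t = exp t * (1 - (1 - q) + (1 - q) * exp (-t)) := by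
      rw [exp_neg]
      field_simp
      ring
    rw [hfact, Real.log_mul (exp_ne_zero t) hpos.ne', Real.log_exp]
    nlinarith [h]

open ProbabilityTheory

lemma mgf_le_of_mem_Icc (ν : Measure X) [IsProbabilityMeasure ν]
    (f : X → ℝ) (hf : Measurable f) (h01 : ∀ z, f z ∈ Set.Icc (0:ℝ) 1) (t : ℝ) :
    mgf f ν t ≤ exp ((∫ z, f z ∂ν) * t + t ^ 2 / 8) := by
  have hfi : Integrable f ν := by
    refine Integrable.mono' (integrable_const 1) hf.aestronglyMeasurable ?_
    exact Filter.Eventually.of_forall fun z => by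
      rw [Real.norm_eq_abs, abs_of_nonneg (h01 z).1]; exact (h01 z).2
  have hei : Integrable (fun z => exp (t * f z)) ν := by
    refine Integrable.mono' (integrable_const (exp |t|)) ?_ ?_
    · exact (hf.const_mul t).exp.aestronglyMeasurable
    · refine Filter.Eventually.of_forall fun z => ?_
      rw [Real.norm_eq_abs, abs_of_pos (exp_pos _), exp_le_exp]
      calc t * f z ≤ |t * f z| := le_abs_self _
        _ = |t| * |f z| := abs_mul _ _
        _ ≤ |t| * 1 := by
            have := (h01 z).1; have := (h01 z).2
            gcongr; rw [abs_of_nonneg (h01 z).1]; exact (h01 z).2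
        _ = |t| := mul_one _
  set m := ∫ z, f z ∂ν with hm
  have hm0 : 0 ≤ m := integral_nonneg fun z => (h01 z).1
  have hm1 : m ≤ 1 := by
    calc m ≤ ∫ _z, (1:ℝ) ∂ν := integral_mono hfi (integrable_const 1) fun z => (h01 z).2
      _ = 1 := by simp
  have step1 : mgf f ν t ≤ 1 - m + m * exp t := by
    have hpt : ∀ z, exp (t * f z) ≤ 1 - f z + f z * exp t := by
      intro z
      obtain ⟨h0, h1⟩ := h01 z
      have := convexOn_exp.2 (Set.mem_univ (0:ℝ)) (Set.mem_univ t)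
        (by linarith : (0:ℝ) ≤ 1 - f z) h0 (by ring)
      simpa [smul_eq_mul, mul_comm] using this
    calc mgf f ν t = ∫ z, exp (t * f z) ∂ν := rfl
      _ ≤ ∫ z, (1 - f z + f z * exp t) ∂ν := by
          refine integral_mono hei ?_ hpt
          exact (((integrable_const 1).sub hfi).add (hfi.mul_const _))
      _ = 1 - m + m * exp t := by
          have h1 : Integrable (fun z => 1 - f z) ν := (integrable_const 1).sub hfi
          have e1 : ∫ z, (1 - f z + f z * exp t) ∂ν
              = (∫ z, (1 - f z) ∂ν) + ∫ z, f z * exp t ∂ν :=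
            integral_add h1 (hfi.mul_const _)
          have e2 : ∫ z, (1 - f z) ∂ν = (∫ _z, (1:ℝ) ∂ν) - ∫ z, f z ∂ν :=
            integral_sub (integrable_const 1) hfi
          rw [e1, e2, integral_mul_const]
          simp [hm]
  have step2 : 1 - m + m * exp t ≤ exp (m * t + t ^ 2 / 8) := by
    have hpos : (0:ℝ) < 1 - m + m * exp t := by
      rcases le_or_gt (exp t) 1 with h | h
      · nlinarith [exp_pos t, mul_nonneg (sub_nonneg.2 hm1) (sub_nonneg.2 h)]
      · nlinarith [mul_le_mul_of_nonneg_left h.le hm0]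
    have := key_ineq hm0 hm1 t
    calc 1 - m + m * exp t = exp (Real.log (1 - m + m * exp t)) := (exp_log hpos).symm
      _ ≤ exp (m * t + t ^ 2 / 8) := by rw [exp_le_exp]; exact this
  exact step1.trans step2

lemma hoeffding_pi (μ : Measure X) [IsProbabilityMeasure μ] (n : ℕ) (hn : 0 < n)
    (f : X → ℝ) (hf : Measurable f) (h01 : ∀ z, f z ∈ Set.Icc (0:ℝ) 1)
    (s : ℝ) (hs : 0 ≤ s) :
    (Measure.pi fun _ : Fin n => μ) {x | (∫ z, f z ∂μ) + s ≤ (∑ i, f (x i)) / n} ≤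
      ENNReal.ofReal (exp (-(2 * n * s ^ 2))) := by
  letI : MeasureSpace X := { toMeasurableSpace := ‹MeasurableSpace X›, volume := μ }
  have hvol : (Measure.pi fun _ : Fin n => μ) = (volume : Measure (Fin n → X)) :=
    volume_pi.symm
  rw [hvol]
  have hprob : IsProbabilityMeasure (volume : Measure (Fin n → X)) := by
    rw [volume_pi]; infer_instance
  set m := ∫ z, f z ∂μ with hm
  have hm0 : 0 ≤ m := integral_nonneg fun z => (h01 z).1
  set S : (Fin n → X) → ℝ := fun x => ∑ i, f (x i) with hS
  have hSmeas : Measurable S := by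
    apply Finset.measurable_sum
    exact fun i _ => hf.comp (measurable_pi_apply i)
  have hSbd : ∀ x, 0 ≤ S x ∧ S x ≤ n := by
    intro x
    constructor
    · exact Finset.sum_nonneg fun i _ => (h01 (x i)).1
    · calc S x ≤ ∑ _i : Fin n, (1:ℝ) := Finset.sum_le_sum fun i _ => (h01 (x i)).2
        _ = n := by simp
  set t : ℝ := 4 * s with ht
  have ht0 : 0 ≤ t := by positivity
  have hint : Integrable (fun x => exp (t * S x)) volume := by
    refine Integrable.mono' (integrable_const (exp (t * n))) ?_ ?_
    · exact ((hSmeas.const_mul t).exp).aestronglyMeasurable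
    · refine Filter.Eventually.of_forall fun x => ?_
      rw [Real.norm_eq_abs, abs_of_pos (exp_pos _), exp_le_exp]
      exact mul_le_mul_of_nonneg_left (hSbd x).2 ht0
  have hset : {x : Fin n → X | m + s ≤ (∑ i, f (x i)) / n} = {x | (m + s) * n ≤ S x} := by
    ext x
    simp only [Set.mem_setOf_eq]
    rw [le_div_iff₀ (by exact_mod_cast hn : (0:ℝ) < n)]
  rw [hset]
  have hcher := ProbabilityTheory.measure_ge_le_exp_mul_mgf (μ := volume) (X := S)
    ((m + s) * n) ht0 hint
  -- compute mgf of the sum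
  have hmgf : ProbabilityTheory.mgf S volume t = (ProbabilityTheory.mgf f μ t) ^ n := by
    unfold ProbabilityTheory.mgf
    calc ∫ x, exp (t * S x) = ∫ x : Fin n → X, ∏ i, exp (t * f (x i)) := by
          congr 1; ext x
          rw [hS, Finset.mul_sum, exp_sum]
      _ = (∫ z, exp (t * f z)) ^ (Fintype.card (Fin n)) :=
          integral_fintype_prod_eq_pow (fun z => exp (t * f z))
      _ = (∫ z, exp (t * f z) ∂μ) ^ n := by rw [Fintype.card_fin]; rfl
  have hmgfle : ProbabilityTheory.mgf S volume t ≤ exp (m * t + t ^ 2 / 8) ^ n := by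
    rw [hmgf]
    exact pow_le_pow_left₀ ProbabilityTheory.mgf_nonneg
      (mgf_le_of_mem_Icc μ f hf h01 t) n
  have hfinal : exp (-t * ((m + s) * n)) * exp (m * t + t ^ 2 / 8) ^ n
      = exp (-(2 * n * s ^ 2)) := by
    rw [← exp_nat_mul, ← exp_add]
    congr 1
    rw [ht]; ring
  have hbound : (volume {x : Fin n → X | (m + s) * n ≤ S x}).toReal
      ≤ exp (-(2 * n * s ^ 2)) := by
    calc (volume {x : Fin n → X | (m + s) * n ≤ S x}).toReal
        ≤ exp (-t * ((m + s) * n)) * ProbabilityTheory.mgf S volume t := hcher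
      _ ≤ exp (-t * ((m + s) * n)) * exp (m * t + t ^ 2 / 8) ^ n := by
          exact mul_le_mul_of_nonneg_left hmgfle (le_of_lt (exp_pos _))
      _ = exp (-(2 * n * s ^ 2)) := hfinal
  calc volume {x : Fin n → X | (m + s) * n ≤ S x}
      = ENNReal.ofReal ((volume {x : Fin n → X | (m + s) * n ≤ S x}).toReal) := by
        rw [ENNReal.ofReal_toReal (measure_ne_top _ _)]
    _ ≤ ENNReal.ofReal (exp (-(2 * n * s ^ 2))) := ENNReal.ofReal_le_ofReal hbound

theorem statement13
    (μ : Measure X) [IsProbabilityMeasure μ]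
    (pr : Measure H) [IsProbabilityMeasure pr]
    (ℓ : H → X → ℝ) (hmeas : Measurable (Function.uncurry ℓ))
    (hrange : ∀ h z, ℓ h z ∈ Set.Icc (0 : ℝ) 1)
    (n : ℕ) (hn : 0 < n) (δ : ℝ) (hδ : 0 < δ) (p : ℕ) :
    ENNReal.ofReal (1 - δ) ≤
      (Measure.pi fun _ : Fin n => μ) {x : Fin n → X | ∀ r : ℝ,
        phiHat ℓ pr n r x
            - ((n : ℝ) ^ p)⁻¹ * Real.sqrt (Real.log ((1 + (n : ℝ) ^ (2 * p + 1)) / δ) / (2 * n)) ≤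
          (pr {g | trueLoss ℓ μ g ≤
            r + Real.sqrt (Real.log ((1 + (n : ℝ) ^ (2 * p + 1)) / δ) / (2 * n))}).toReal} := by
  by_cases hδ1 : 1 ≤ δ
  · rw [ENNReal.ofReal_of_nonpos (by linarith)]
    exact zero_le
  push_neg at hδ1
  -- notation
  set N : ℝ := (n : ℝ) ^ (2 * p + 1) with hNdef
  set L : ℝ := Real.log ((1 + N) / δ) with hLdef
  set s : ℝ := Real.sqrt (L / (2 * n)) with hsdef
  set a : ℝ := ((n : ℝ) ^ p)⁻¹ * s with hadef
  have hn1 : (1 : ℝ) ≤ (n : ℝ) := by exact_mod_cast hn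
  have hnpos : (0 : ℝ) < n := by linarith
  have hN1 : (1 : ℝ) ≤ N := one_le_pow₀ hn1
  have hL2 : Real.log 2 ≤ L := by
    rw [hLdef]
    apply Real.log_le_log (by norm_num)
    rw [le_div_iff₀ hδ]
    nlinarith
  have hLpos : (0 : ℝ) < L := lt_of_lt_of_le (Real.log_pos (by norm_num)) hL2
  have hLhalf : (1 / 2 : ℝ) ≤ L := by
    have := Real.log_two_gt_d9
    linarith
  have hsqn : (0 : ℝ) < Real.sqrt n := Real.sqrt_pos.2 hnpos
  have hnp : (0 : ℝ) < (n : ℝ) ^ p := by positivity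
  have hspos : (0 : ℝ) < s := Real.sqrt_pos.2 (by positivity)
  have hapos : (0 : ℝ) < a := by positivity
  have hs2 : s ^ 2 = L / (2 * n) := Real.sq_sqrt (by positivity)
  -- s ≥ 1/(2√n)
  have hs_lb : 1 / (2 * Real.sqrt n) ≤ s := by
    rw [hsdef]
    rw [show (1 : ℝ) / (2 * Real.sqrt n) = Real.sqrt (1 / (4 * n)) by
      rw [eq_comm, Real.sqrt_eq_iff_eq_sq] <;> first
        | (field_simp; nlinarith [Real.sq_sqrt hnpos.le])
        | positivity
        | positivity]
    apply Real.sqrt_le_sqrt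
    rw [div_le_div_iff₀ (by positivity) (by positivity)]
    nlinarith
  -- 1 ≤ a * (1 + N)
  have hamgm : 2 * ((n : ℝ) ^ p * Real.sqrt n) ≤ 1 + N := by
    have h1 : N = ((n : ℝ) ^ p) ^ 2 * n := by
      rw [hNdef, ← pow_mul, pow_succ, mul_comm 2 p]
    nlinarith [sq_nonneg ((n : ℝ) ^ p * Real.sqrt n - 1), Real.sq_sqrt hnpos.le]
  have hkey : 1 ≤ a * (1 + N) := by
    have h1 : ((n : ℝ) ^ p)⁻¹ * (1 / (2 * Real.sqrt n)) * (2 * ((n : ℝ) ^ p * Real.sqrt n))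
        = 1 := by field_simp
    calc (1 : ℝ) = ((n : ℝ) ^ p)⁻¹ * (1 / (2 * Real.sqrt n))
          * (2 * ((n : ℝ) ^ p * Real.sqrt n)) := h1.symm
      _ ≤ ((n : ℝ) ^ p)⁻¹ * s * (1 + N) := by
          apply mul_le_mul
          · exact mul_le_mul_of_nonneg_left hs_lb (by positivity)
          · exact hamgm
          · positivity
          · positivity
  -- exp(-(2ns²)) = δ/(1+N) ≤ δ * a
  have hexp : exp (-(2 * n * s ^ 2)) = δ / (1 + N) := by
    have h2 : 2 * (n : ℝ) * s ^ 2 = L := by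
      rw [hs2]; field_simp
    rw [h2, hLdef, ← Real.log_inv, Real.exp_log (by positivity)]
    rw [inv_div]
  have hδa : exp (-(2 * n * s ^ 2)) ≤ δ * a := by
    rw [hexp, div_le_iff₀ (by positivity)]
    nlinarith
  -- measurability
  have hempMeas : Measurable fun q : (Fin n → X) × H => empLoss ℓ n q.2 q.1 := by
    apply Measurable.div_const
    apply Finset.measurable_sum
    intro i _
    exact hmeas.comp (measurable_snd.prodMk ((measurable_pi_apply i).comp measurable_fst))
  have htrueMeas : Measurable fun g : H => trueLoss ℓ μ g := by
    have : StronglyMeasurable fun g : H => ∫ z, Function.uncurry ℓ (g, z) ∂μ :=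
      hmeas.stronglyMeasurable.integral_prod_right'
    exact this.measurable
  set C : Set ((Fin n → X) × H) :=
    {q | empLoss ℓ n q.2 q.1 + s ≤ trueLoss ℓ μ q.2} with hCdef
  have hC : MeasurableSet C :=
    measurableSet_le (hempMeas.add_const s) (htrueMeas.comp measurable_snd)
  set Fm : (Fin n → X) → ENNReal := fun x => pr (Prod.mk x ⁻¹' C) with hFmdef
  have hFm : Measurable Fm := measurable_measure_prodMk_left hC
  haveI : IsProbabilityMeasure (Measure.pi fun _ : Fin n => μ) := by infer_instance
  -- Fubini + Hoeffding
  have hfub : ∫⁻ x, Fm x ∂(Measure.pi fun _ : Fin n => μ)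
      ≤ ENNReal.ofReal (exp (-(2 * n * s ^ 2))) := by
    have h1 : ∫⁻ x, Fm x ∂(Measure.pi fun _ : Fin n => μ)
        = ((Measure.pi fun _ : Fin n => μ).prod pr) C := (Measure.prod_apply hC).symm
    have h2 : ((Measure.pi fun _ : Fin n => μ).prod pr) C
        = ∫⁻ g, (Measure.pi fun _ : Fin n => μ) ((fun x => (x, g)) ⁻¹' C) ∂pr :=
      Measure.prod_apply_symm hC
    rw [h1, h2]
    have h3 : ∀ g : H, (Measure.pi fun _ : Fin n => μ) ((fun x => (x, g)) ⁻¹' C)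
        ≤ ENNReal.ofReal (exp (-(2 * n * s ^ 2))) := by
      intro g
      have hfg : Measurable fun z => 1 - ℓ g z := by
        apply Measurable.const_sub
        exact hmeas.comp measurable_prodMk_left
      have hfg01 : ∀ z, (1 - ℓ g z) ∈ Set.Icc (0 : ℝ) 1 := by
        intro z
        obtain ⟨h0, h1⟩ := hrange g z
        constructor <;> [linarith; linarith]
      have hli : Integrable (fun z => ℓ g z) μ := by
        refine Integrable.mono' (integrable_const 1)
          (hmeas.comp measurable_prodMk_left).aestronglyMeasurable ?_
        refine Filter.Eventually.of_forall fun z => ?_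
        rw [Real.norm_eq_abs, abs_of_nonneg (hrange g z).1]
        exact (hrange g z).2
      have hintf : ∫ z, (1 - ℓ g z) ∂μ = 1 - trueLoss ℓ μ g := by
        rw [integral_sub (integrable_const 1) hli]
        simp [trueLoss]
      have hseteq : ((fun x => (x, g)) ⁻¹' C)
          = {x : Fin n → X | (∫ z, (1 - ℓ g z) ∂μ) + s ≤ (∑ i, (1 - ℓ g (x i))) / n} := by
        ext x
        simp only [hCdef, Set.mem_preimage, Set.mem_setOf_eq, hintf]
        have hsum : (∑ i, (1 - ℓ g (x i))) / (n : ℝ) = 1 - empLoss ℓ n g x := by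
          rw [Finset.sum_sub_distrib, Finset.sum_const, Finset.card_univ, Fintype.card_fin,
            empLoss, sub_div, nsmul_eq_mul, mul_one, div_self hnpos.ne']
        rw [hsum]
        constructor <;> intro h <;> linarith
      rw [hseteq]
      exact hoeffding_pi μ n hn (fun z => 1 - ℓ g z) hfg hfg01 s hspos.le
    calc ∫⁻ g, (Measure.pi fun _ : Fin n => μ) ((fun x => (x, g)) ⁻¹' C) ∂pr
        ≤ ∫⁻ _g, ENNReal.ofReal (exp (-(2 * n * s ^ 2))) ∂pr := lintegral_mono h3
      _ = ENNReal.ofReal (exp (-(2 * n * s ^ 2))) := by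
          rw [lintegral_const, measure_univ, mul_one]
  -- Markov
  set ε : ENNReal := ENNReal.ofReal a with hεdef
  have hε0 : ε ≠ 0 := by
    rw [hεdef]; simpa [ENNReal.ofReal_eq_zero, not_le] using hapos
  have hεtop : ε ≠ ⊤ := ENNReal.ofReal_ne_top
  have hmark : (Measure.pi fun _ : Fin n => μ) {x | ε ≤ Fm x} ≤ ENNReal.ofReal δ := by
    calc (Measure.pi fun _ : Fin n => μ) {x | ε ≤ Fm x}
        ≤ (∫⁻ x, Fm x ∂(Measure.pi fun _ : Fin n => μ)) / ε :=
          meas_ge_le_lintegral_div hFm.aemeasurable hε0 hεtop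
      _ ≤ ENNReal.ofReal (δ * a) / ε := by
          apply ENNReal.div_le_div_right
          exact hfub.trans (ENNReal.ofReal_le_ofReal hδa)
      _ = ε * (ENNReal.ofReal δ / ε) := by
          rw [ENNReal.ofReal_mul hδ.le, hεdef, mul_comm, mul_div_assoc]
      _ = ENNReal.ofReal δ := ENNReal.mul_div_cancel hε0 hεtop
  -- inclusion of the good event
  set G : Set (Fin n → X) := {x | Fm x < ε} with hGdef
  have hGmeas : MeasurableSet G := measurableSet_lt hFm measurable_const
  have hGsub : G ⊆ {x : Fin n → X | ∀ r : ℝ,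
      phiHat ℓ pr n r x - a ≤ (pr {g | trueLoss ℓ μ g ≤ r + s}).toReal} := by
    intro x hx r
    have hxlt : (pr (Prod.mk x ⁻¹' C)).toReal < a := by
      have := hx
      rw [hGdef, Set.mem_setOf_eq, hεdef, ENNReal.lt_ofReal_iff_toReal_lt
        (measure_ne_top _ _)] at this
      exact this
    have hsub : {g | empLoss ℓ n g x ≤ r}
        ⊆ {g | trueLoss ℓ μ g ≤ r + s} ∪ (Prod.mk x ⁻¹' C) := by
      intro g hg
      simp only [Set.mem_setOf_eq] at hg
      by_cases hcase : trueLoss ℓ μ g ≤ r + s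
      · exact Or.inl hcase
      · right
        simp only [hCdef, Set.mem_preimage, Set.mem_setOf_eq]
        push_neg at hcase
        linarith
    have h1 : pr {g | empLoss ℓ n g x ≤ r}
        ≤ pr {g | trueLoss ℓ μ g ≤ r + s} + pr (Prod.mk x ⁻¹' C) :=
      (measure_mono hsub).trans (measure_union_le _ _)
    have h2 : (pr {g | empLoss ℓ n g x ≤ r}).toReal
        ≤ (pr {g | trueLoss ℓ μ g ≤ r + s}).toReal + (pr (Prod.mk x ⁻¹' C)).toReal := by
      rw [← ENNReal.toReal_add (measure_ne_top _ _) (measure_ne_top _ _)]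
      exact ENNReal.toReal_mono (by finiteness) h1
    rw [phiHat]
    linarith
  -- conclude
  calc ENNReal.ofReal (1 - δ) = 1 - ENNReal.ofReal δ := by
        rw [ENNReal.ofReal_sub 1 hδ.le, ENNReal.ofReal_one]
    _ ≤ (Measure.pi fun _ : Fin n => μ) G := by
        rw [tsub_le_iff_right]
        have hcompl : (Measure.pi fun _ : Fin n => μ) Gᶜ ≤ ENNReal.ofReal δ := by
          have : Gᶜ = {x | ε ≤ Fm x} := by
            ext x; simp [hGdef, not_lt]
          rw [this]; exact hmark
        calc (1 : ENNReal) = (Measure.pi fun _ : Fin n => μ) Set.univ := measure_univ.symm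
          _ = (Measure.pi fun _ : Fin n => μ) G
              + (Measure.pi fun _ : Fin n => μ) Gᶜ :=
              (measure_add_measure_compl hGmeas).symm
          _ ≤ (Measure.pi fun _ : Fin n => μ) G + ENNReal.ofReal δ :=
              add_le_add le_rfl hcompl
    _ ≤ _ := measure_mono hGsub
end
end

section
/- Assume the loss ℓ has values in [0,1]. Then for all s, t > 0 and every K ∈ ℕ, μ^n{ x ∈ X^n : π{ h ∈ H : L̂(h,x) − L(h) > s } > t } ≤ e^{−2Kt²} + K e^{−2ns²}. -/
open MeasureTheory Real Filter
open scoped ENNReal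

noncomputable section

variable {H X : Type*} [MeasurableSpace H] [MeasurableSpace X]

lemma auxD_pos {m : ℝ} (hm0 : 0 ≤ m) (hm1 : m ≤ 1) (t : ℝ) :
    0 < 1 - m + m * Real.exp t := by
  rcases eq_or_lt_of_le hm1 with h | h
  · subst h; simpa using Real.exp_pos t
  · have := mul_nonneg hm0 (Real.exp_pos t).le
    linarith

/-- Hoeffding's lemma, analytic core. -/
lemma aux_hoeffding (m : ℝ) (hm0 : 0 ≤ m) (hm1 : m ≤ 1) (t : ℝ) :
    1 - m + m * Real.exp t ≤ Real.exp (t * m + t ^ 2 / 8) := by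
  set D : ℝ → ℝ := fun u => 1 - m + m * Real.exp u with hDdef
  have hD : ∀ u, 0 < D u := fun u => auxD_pos hm0 hm1 u
  set G : ℝ → ℝ := fun u => m * Real.exp u / D u - (m + u / 4) with hGdef
  set F : ℝ → ℝ := fun u => Real.log (D u) - (u * m + u ^ 2 / 8) with hFdef
  have hDderiv : ∀ u : ℝ, HasDerivAt D (m * Real.exp u) u := by
    intro u
    exact ((Real.hasDerivAt_exp u).const_mul m).const_add (1 - m)
  have hFderiv : ∀ u : ℝ, HasDerivAt F (G u) u := by
    intro u
    have h1 : HasDerivAt (fun v => Real.log (D v)) (m * Real.exp u / D u) u :=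
      (hDderiv u).log (hD u).ne'
    have h2 : HasDerivAt (fun v : ℝ => v * m + v ^ 2 / 8) (m + u / 4) u := by
      have := ((hasDerivAt_id u).mul_const m).add ((hasDerivAt_pow 2 u).div_const 8)
      exact this.congr_deriv (by ring)
    exact h1.sub h2
  have hGderiv : ∀ u : ℝ, HasDerivAt G (m * Real.exp u * (1 - m) / (D u) ^ 2 - 1 / 4) u := by
    intro u
    have h1 : HasDerivAt (fun v => m * Real.exp v / D v)
        ((m * Real.exp u * D u - m * Real.exp u * (m * Real.exp u)) / (D u) ^ 2) u :=
      ((Real.hasDerivAt_exp u).const_mul m).div (hDderiv u) (hD u).ne'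
    have h2 : HasDerivAt (fun v : ℝ => m + v / 4) (1 / 4) u := by
      simpa using ((hasDerivAt_id u).div_const 4).const_add m
    have h3 := h1.sub h2
    refine h3.congr_deriv ?_
    have : m * Real.exp u * D u - m * Real.exp u * (m * Real.exp u)
        = m * Real.exp u * (1 - m) := by simp only [hDdef]; ring
    rw [this]
  have hG0 : G 0 = 0 := by simp [hGdef, hDdef]
  have hGnonpos : ∀ u : ℝ, m * Real.exp u * (1 - m) / (D u) ^ 2 - 1 / 4 ≤ 0 := by
    intro u
    rw [sub_nonpos, div_le_iff₀ (pow_pos (hD u) 2)]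
    have h1 : 0 ≤ (m * Real.exp u - (1 - m)) ^ 2 := sq_nonneg _
    have h2 : D u = 1 - m + m * Real.exp u := rfl
    nlinarith [hD u]
  have hGanti : Antitone G := by
    refine antitone_of_deriv_nonpos (fun u => (hGderiv u).differentiableAt) (fun u => ?_)
    rw [(hGderiv u).deriv]; exact hGnonpos u
  have hF0 : F 0 = 0 := by simp [hFdef, hDdef]
  have key : F t ≤ 0 := by
    rcases le_total 0 t with h | h
    · have hanti : AntitoneOn F (Set.Ici (0 : ℝ)) := by
        refine antitoneOn_of_deriv_nonpos (convex_Ici 0)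
          ((fun u _ => (hFderiv u).differentiableAt.continuousAt.continuousWithinAt) :
            ContinuousOn F _) ?_ ?_
        · intro u _; exact (hFderiv u).differentiableAt.differentiableWithinAt
        · intro u hu
          rw [(hFderiv u).deriv]
          have : G u ≤ G 0 := hGanti (le_of_lt (by simpa using hu))
          simpa [hG0] using this
      have := hanti (Set.self_mem_Ici) (Set.mem_Ici.2 h) h
      simpa [hF0] using this
    · have hmono : MonotoneOn F (Set.Iic (0 : ℝ)) := by
        refine monotoneOn_of_deriv_nonneg (convex_Iic 0)
          ((fun u _ => (hFderiv u).differentiableAt.continuousAt.continuousWithinAt) :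
            ContinuousOn F _) ?_ ?_
        · intro u _; exact (hFderiv u).differentiableAt.differentiableWithinAt
        · intro u hu
          rw [(hFderiv u).deriv]
          have : G 0 ≤ G u := hGanti (le_of_lt (by simpa using hu))
          simpa [hG0] using this
      have := hmono (Set.mem_Iic.2 h) (Set.self_mem_Iic) h
      simpa [hF0] using this
  have : Real.log (D t) ≤ t * m + t ^ 2 / 8 := by
    have := key; simp only [hFdef, sub_nonpos] at this; exact this
  exact (Real.log_le_iff_le_exp (hD t)).1 this

lemma aux_pinsker {t : ℝ} (h0 : 0 ≤ t) (h1 : t ≤ 1) : 1 - t ≤ Real.exp (-2 * t ^ 2) := by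
  have h := aux_hoeffding t h0 h1 (-4 * t)
  have he : (-4 * t) * t + (-4 * t) ^ 2 / 8 = -2 * t ^ 2 := by ring
  rw [he] at h
  nlinarith [mul_nonneg h0 (Real.exp_pos (-4 * t)).le]


/-- Hoeffding's inequality for one hypothesis. -/
lemma aux_slice (μ : Measure X) [IsProbabilityMeasure μ]
    (ℓ : H → X → ℝ) (hmeas : Measurable (Function.uncurry ℓ))
    (hrange : ∀ h z, ℓ h z ∈ Set.Icc (0 : ℝ) 1)
    (n : ℕ) (hn : 0 < n) (s : ℝ) (hs : 0 < s) (h : H) :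
    (Measure.pi fun _ : Fin n => μ)
      {x : Fin n → X | s < empLoss ℓ n h x - trueLoss ℓ μ h} ≤
      ENNReal.ofReal (Real.exp (-2 * n * s ^ 2)) := by
  letI : MeasureSpace X := ⟨μ⟩
  have hvol : (volume : Measure X) = μ := rfl
  set P : Measure (Fin n → X) := Measure.pi fun _ : Fin n => μ with hP
  haveI : IsProbabilityMeasure P := by rw [hP]; infer_instance
  have hmh : Measurable (ℓ h) := hmeas.comp measurable_prodMk_left
  have hint : Integrable (ℓ h) μ := by
    refine (integrable_const (1 : ℝ)).mono' hmh.aestronglyMeasurable (ae_of_all _ fun z => ?_)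
    rw [Real.norm_eq_abs, abs_le]
    exact ⟨by linarith [(hrange h z).1], (hrange h z).2⟩
  set m : ℝ := trueLoss ℓ μ h with hm
  have hm0 : 0 ≤ m := integral_nonneg fun z => (hrange h z).1
  have hm1 : m ≤ 1 := by
    have := integral_mono hint (integrable_const (1 : ℝ)) (fun z => (hrange h z).2)
    simpa [hm, trueLoss] using this
  set Y : (Fin n → X) → ℝ := fun x => ∑ i, ℓ h (x i) with hY
  have hYmeas : Measurable Y :=
    Finset.measurable_sum _ fun i _ => hmh.comp (measurable_pi_apply i)
  -- integrability of exp (4s * Y)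
  have hYle : ∀ x, Y x ≤ n := by
    intro x
    calc Y x ≤ ∑ _i : Fin n, (1 : ℝ) :=
          Finset.sum_le_sum fun i _ => (hrange h (x i)).2
      _ = n := by simp
  have hintexp : Integrable (fun x => Real.exp (4 * s * Y x)) P := by
    refine (integrable_const (Real.exp (4 * s * n))).mono'
      ((Real.measurable_exp.comp (hYmeas.const_mul _)).aestronglyMeasurable)
      (ae_of_all _ fun x => ?_)
    rw [Real.norm_eq_abs, abs_of_pos (Real.exp_pos _)]
    exact Real.exp_le_exp.2 (by nlinarith [hYle x])
  -- Chernoff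
  have hcher := ProbabilityTheory.measure_ge_le_exp_mul_mgf (X := Y) (μ := P)
    (t := 4 * s) (n * (m + s)) (by positivity) hintexp
  -- event inclusion
  have hsub : {x : Fin n → X | s < empLoss ℓ n h x - trueLoss ℓ μ h} ⊆
      {x | (n : ℝ) * (m + s) ≤ Y x} := by
    intro x hx
    simp only [Set.mem_setOf_eq] at hx ⊢
    have hn' : (0 : ℝ) < n := by exact_mod_cast hn
    have : m + s < Y x / n := by
      simp only [empLoss, ← hm] at hx; linarith
    have := (lt_div_iff₀ hn').1 this
    linarith
  -- mgf bound
  have hcoord : ∫ z, Real.exp (4 * s * ℓ h z) ∂μ ≤ Real.exp (4 * s * m + (4 * s) ^ 2 / 8) := by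
    have hintc : Integrable (fun z => Real.exp (4 * s * ℓ h z)) μ := by
      refine (integrable_const (Real.exp (4 * s))).mono'
        ((Real.measurable_exp.comp (hmh.const_mul _)).aestronglyMeasurable)
        (ae_of_all _ fun z => ?_)
      rw [Real.norm_eq_abs, abs_of_pos (Real.exp_pos _)]
      exact Real.exp_le_exp.2 (by nlinarith [(hrange h z).1, (hrange h z).2])
    have hptwise : ∀ z, Real.exp (4 * s * ℓ h z) ≤
        1 - ℓ h z + ℓ h z * Real.exp (4 * s) := by
      intro z
      have hcvx := convexOn_exp.2 (Set.mem_univ (0 : ℝ)) (Set.mem_univ (4 * s))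
        (by linarith [(hrange h z).2] : (0:ℝ) ≤ 1 - ℓ h z) (hrange h z).1 (by ring)
      simpa [mul_comm] using hcvx
    have hint2 : Integrable (fun z => 1 - ℓ h z + ℓ h z * Real.exp (4 * s)) μ :=
      ((integrable_const (1:ℝ)).sub hint).add (hint.mul_const _)
    calc ∫ z, Real.exp (4 * s * ℓ h z) ∂μ
        ≤ ∫ z, (1 - ℓ h z + ℓ h z * Real.exp (4 * s)) ∂μ :=
          integral_mono hintc hint2 hptwise
      _ = 1 - m + m * Real.exp (4 * s) := by
          have e1 : Integrable (fun z => (1:ℝ) - ℓ h z) μ := (integrable_const _).sub hint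
          have h1 : ∫ z, (1 - ℓ h z + ℓ h z * Real.exp (4 * s)) ∂μ
              = (∫ z, (1 - ℓ h z) ∂μ) + ∫ z, ℓ h z * Real.exp (4 * s) ∂μ :=
            integral_add e1 (hint.mul_const _)
          have h2 : ∫ z, ((1:ℝ) - ℓ h z) ∂μ = (∫ _z, (1:ℝ) ∂μ) - ∫ z, ℓ h z ∂μ :=
            integral_sub (integrable_const _) hint
          rw [h1, h2, integral_mul_const]
          simp [hm, trueLoss]
      _ ≤ Real.exp (4 * s * m + (4 * s) ^ 2 / 8) := aux_hoeffding m hm0 hm1 (4 * s)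
  have hmgf : ProbabilityTheory.mgf Y P (4 * s) ≤ Real.exp (-2 * n * s ^ 2 + 4 * s * (n * (m + s))) := by
    have hprod : ProbabilityTheory.mgf Y P (4 * s)
        = (∫ z, Real.exp (4 * s * ℓ h z) ∂μ) ^ n := by
      rw [ProbabilityTheory.mgf, hP, ← hvol, ← MeasureTheory.volume_pi]
      rw [show (fun x : Fin n → X => Real.exp (4 * s * Y x))
          = fun x : Fin n → X => ∏ i, Real.exp (4 * s * ℓ h (x i)) by
        funext x; rw [hY, Finset.mul_sum, Real.exp_sum]]
      simpa [MeasureTheory.volume_pi] using MeasureTheory.integral_fintype_prod_eq_pow (ι := Fin n)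
        (fun z => Real.exp (4 * s * ℓ h z))
    rw [hprod]
    calc (∫ z, Real.exp (4 * s * ℓ h z) ∂μ) ^ n
        ≤ (Real.exp (4 * s * m + (4 * s) ^ 2 / 8)) ^ n :=
          pow_le_pow_left₀ (integral_nonneg fun z => (Real.exp_pos _).le) hcoord n
      _ = Real.exp (n * (4 * s * m + (4 * s) ^ 2 / 8)) := (Real.exp_nat_mul _ n).symm
      _ = Real.exp (-2 * n * s ^ 2 + 4 * s * (n * (m + s))) := by ring_nf
  -- combine
  have hfinal : (P {x | (n : ℝ) * (m + s) ≤ Y x}).toReal ≤ Real.exp (-2 * n * s ^ 2) := by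
    calc (P {x | (n : ℝ) * (m + s) ≤ Y x}).toReal
        ≤ Real.exp (-(4 * s) * (n * (m + s))) * ProbabilityTheory.mgf Y P (4 * s) := hcher
      _ ≤ Real.exp (-(4 * s) * (n * (m + s))) *
            Real.exp (-2 * n * s ^ 2 + 4 * s * (n * (m + s))) := by
          exact mul_le_mul_of_nonneg_left hmgf (Real.exp_pos _).le
      _ = Real.exp (-2 * n * s ^ 2) := by rw [← Real.exp_add]; ring_nf
  calc P {x : Fin n → X | s < empLoss ℓ n h x - trueLoss ℓ μ h}
      ≤ P {x | (n : ℝ) * (m + s) ≤ Y x} := measure_mono hsub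
    _ ≤ ENNReal.ofReal (Real.exp (-2 * n * s ^ 2)) := by
        rw [← ENNReal.ofReal_toReal (measure_ne_top P _)]
        exact ENNReal.ofReal_le_ofReal hfinal

theorem statement14
    (μ : Measure X) [IsProbabilityMeasure μ]
    (pr : Measure H) [IsProbabilityMeasure pr]
    (ℓ : H → X → ℝ) (hmeas : Measurable (Function.uncurry ℓ))
    (hrange : ∀ h z, ℓ h z ∈ Set.Icc (0 : ℝ) 1)
    (n : ℕ) (hn : 0 < n) (s t : ℝ) (hs : 0 < s) (ht : 0 < t) (K : ℕ) :
    (Measure.pi fun _ : Fin n => μ)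
        {x : Fin n → X | t < (pr {h | s < empLoss ℓ n h x - trueLoss ℓ μ h}).toReal} ≤
      ENNReal.ofReal (Real.exp (-2 * K * t ^ 2) + K * Real.exp (-2 * n * s ^ 2)) := by
  set P : Measure (Fin n → X) := Measure.pi fun _ : Fin n => μ with hP
  haveI : IsProbabilityMeasure P := by rw [hP]; infer_instance
  by_cases ht1 : t ≤ 1
  case neg =>
    -- event is empty
    have hempty : {x : Fin n → X | t < (pr {h | s < empLoss ℓ n h x - trueLoss ℓ μ h}).toReal}
        = ∅ := by
      ext x
      simp only [Set.mem_setOf_eq, Set.mem_empty_iff_false, iff_false, not_lt]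
      have h1 : (pr {h | s < empLoss ℓ n h x - trueLoss ℓ μ h}).toReal ≤ 1 :=
        ENNReal.toReal_le_of_le_ofReal zero_le_one (by simpa using prob_le_one)
      linarith
    rw [hempty]
    simp
  case pos =>
  -- the joint bad set
  set A : Set (H × (Fin n → X)) :=
    {p | s < empLoss ℓ n p.1 p.2 - trueLoss ℓ μ p.1} with hA
  have hAmeas : MeasurableSet A := by
    have hemp : Measurable fun p : H × (Fin n → X) => empLoss ℓ n p.1 p.2 := by
      apply Measurable.div_const
      exact Finset.measurable_sum _ fun i _ =>
        hmeas.comp (measurable_fst.prodMk ((measurable_pi_apply i).comp measurable_snd))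
    have htrue : Measurable fun p : H × (Fin n → X) => trueLoss ℓ μ p.1 := by
      have : StronglyMeasurable fun h : H => ∫ z, Function.uncurry ℓ (h, z) ∂μ :=
        (hmeas.stronglyMeasurable).integral_prod_right'
      exact this.measurable.comp measurable_fst
    exact measurableSet_lt measurable_const (hemp.sub htrue)
  have hslice_meas : Measurable fun x : Fin n → X => pr ((fun h => (h, x)) ⁻¹' A) :=
    measurable_measure_prodMk_right hAmeas
  have hslice_eq : ∀ x : Fin n → X,
      ((fun h => (h, x)) ⁻¹' A) = {h | s < empLoss ℓ n h x - trueLoss ℓ μ h} := fun x => rfl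
  -- the bounding function
  set g : (Fin n → X) → ℝ≥0∞ := fun x =>
    ENNReal.ofReal ((1 - t) ^ K) + K * pr ((fun h => (h, x)) ⁻¹' A) with hg
  have hgmeas : Measurable g := (measurable_const.add (hslice_meas.const_mul _))
  -- pointwise: on the event, 1 ≤ g
  have hsubset : {x : Fin n → X | t < (pr {h | s < empLoss ℓ n h x - trueLoss ℓ μ h}).toReal}
      ⊆ {x | 1 ≤ g x} := by
    intro x hx
    simp only [Set.mem_setOf_eq] at hx ⊢
    set q : ℝ := (pr {h | s < empLoss ℓ n h x - trueLoss ℓ μ h}).toReal with hq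
    have hq1 : q ≤ 1 := ENNReal.toReal_le_of_le_ofReal zero_le_one (by simpa using prob_le_one)
    have hq0 : 0 ≤ q := ENNReal.toReal_nonneg
    have hreal : 1 ≤ (1 - t) ^ K + K * q := by
      have h1 : 1 + (K : ℝ) * (-q) ≤ (1 + -q) ^ K :=
        one_add_mul_le_pow (by linarith) K
      have h2 : ((1 : ℝ) + -q) ^ K ≤ (1 - t) ^ K := by
        apply pow_le_pow_left₀ (by linarith)
        linarith
      linarith
    have hprval : pr {h | s < empLoss ℓ n h x - trueLoss ℓ μ h} = ENNReal.ofReal q := by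
      rw [hq, ENNReal.ofReal_toReal (measure_ne_top pr _)]
    calc (1 : ℝ≥0∞) = ENNReal.ofReal 1 := by simp
      _ ≤ ENNReal.ofReal ((1 - t) ^ K + K * q) := ENNReal.ofReal_le_ofReal hreal
      _ ≤ g x := by
          rw [ENNReal.ofReal_add (pow_nonneg (by linarith) K) (by positivity), hg]
          apply add_le_add_right
          rw [hslice_eq x, hprval, ENNReal.ofReal_mul (by positivity)]
          simp
  -- ∫ g computation
  have hintg : ∫⁻ x, g x ∂P ≤ ENNReal.ofReal ((1 - t) ^ K)
      + K * ENNReal.ofReal (Real.exp (-2 * n * s ^ 2)) := by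
    rw [hg]
    rw [lintegral_add_left measurable_const, lintegral_const, lintegral_const_mul _ hslice_meas]
    simp only [measure_univ, mul_one]
    apply add_le_add_right
    gcongr _ * ?_
    -- Fubini
    have hF : ∫⁻ x, pr ((fun h => (h, x)) ⁻¹' A) ∂P = (pr.prod P) A :=
      (Measure.prod_apply_symm hAmeas).symm
    rw [hF, Measure.prod_apply hAmeas]
    calc ∫⁻ h, P (Prod.mk h ⁻¹' A) ∂pr
        ≤ ∫⁻ _h, ENNReal.ofReal (Real.exp (-2 * n * s ^ 2)) ∂pr := by
          apply lintegral_mono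
          intro h
          exact aux_slice μ ℓ hmeas hrange n hn s hs h
      _ = ENNReal.ofReal (Real.exp (-2 * n * s ^ 2)) := by simp
  -- final arithmetic
  have hpow : ((1 : ℝ) - t) ^ K ≤ Real.exp (-2 * K * t ^ 2) := by
    have h1 : ((1 : ℝ) - t) ^ K ≤ (Real.exp (-2 * t ^ 2)) ^ K :=
      pow_le_pow_left₀ (by linarith) (aux_pinsker ht.le ht1) K
    have h2 : (Real.exp (-2 * t ^ 2)) ^ K = Real.exp (-2 * K * t ^ 2) := by
      rw [← Real.exp_nat_mul]; ring_nf
    linarith [h1, h2.le]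
  calc P {x : Fin n → X | t < (pr {h | s < empLoss ℓ n h x - trueLoss ℓ μ h}).toReal}
      ≤ P {x | 1 ≤ g x} := measure_mono hsubset
    _ ≤ ∫⁻ x, g x ∂P := by
        simpa using mul_meas_ge_le_lintegral₀ hgmeas.aemeasurable 1
    _ ≤ ENNReal.ofReal ((1 - t) ^ K) + K * ENNReal.ofReal (Real.exp (-2 * n * s ^ 2)) := hintg
    _ ≤ ENNReal.ofReal (Real.exp (-2 * K * t ^ 2) + K * Real.exp (-2 * n * s ^ 2)) := by
        rw [ENNReal.ofReal_add (by positivity) (by positivity)]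
        apply add_le_add (ENNReal.ofReal_le_ofReal hpow)
        rw [ENNReal.ofReal_mul (by positivity)]
        simp
end
end

section
/- Assume the loss ℓ has values in [0,1]. Let δ > 0, p ∈ ℕ, and s(n,δ,p) = √( ln((1+n^{2p+1})/δ) / (2n) ). Then with probability at least 1 − δ in x ∼ μ^n, for every r ∈ ℝ with r + s(n,δ,p) < L_min one has φ̂(r, x) ≤ n^{−p} s(n,δ,p), where L_min = ess inf_{h∼π} L(h). In particular, if labels are such that L_min is large while empirical minima are small, the prior volume of hypotheses with empirical loss below L_min − s(n,δ,p) is at most n^{−p} s(n,δ,p) with probability at least 1 − δ. -/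
open MeasureTheory Real Filter

noncomputable section

variable {H X : Type*} [MeasurableSpace H] [MeasurableSpace X]

section Aux

lemma hoeffding_log_aux (m : ℝ) (hm0 : 0 ≤ m) (hm1 : m ≤ 1) (t : ℝ) :
    Real.log (1 - m + m * Real.exp t) ≤ m * t + t ^ 2 / 8 := by
  have hv : ∀ u : ℝ, 0 < 1 - m + m * Real.exp u := by
    intro u; nlinarith [Real.exp_pos u, mul_nonneg (sub_nonneg.2 hm1) (Real.exp_pos u).le, mul_nonneg hm0 (Real.exp_pos u).le]
  set D : ℝ → ℝ := fun u => m * u + u ^ 2 / 8 - Real.log (1 - m + m * Real.exp u) with hDdef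
  set E : ℝ → ℝ := fun u => m + u / 4 - m * Real.exp u / (1 - m + m * Real.exp u) with hEdef
  have hvd : ∀ u : ℝ, HasDerivAt (fun u : ℝ => 1 - m + m * Real.exp u) (m * Real.exp u) u :=
    fun u => ((Real.hasDerivAt_exp u).const_mul m).const_add (1 - m)
  have hD' : ∀ u, HasDerivAt D (E u) u := by
    intro u
    have h2 : HasDerivAt (fun u : ℝ => Real.log (1 - m + m * Real.exp u))
        (m * Real.exp u / (1 - m + m * Real.exp u)) u := (hvd u).log (hv u).ne'
    have h3 : HasDerivAt (fun u : ℝ => m * u + u ^ 2 / 8)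
        (m * 1 + (↑2 * u ^ 1) / 8) u :=
      (((hasDerivAt_id u).const_mul m)).add ((hasDerivAt_pow 2 u).div_const 8)
    have := h3.sub h2
    convert this using 1
    show m + u / 4 - m * Real.exp u / (1 - m + m * Real.exp u) = _
    push_cast; ring
    all_goals rfl
  have hE' : ∀ u, HasDerivAt E
      ((0 + 1/4) - (m * Real.exp u * (1 - m + m * Real.exp u) -
        m * Real.exp u * (m * Real.exp u)) / (1 - m + m * Real.exp u) ^ 2) u := by
    intro u
    have hq : HasDerivAt (fun u : ℝ => m * Real.exp u / (1 - m + m * Real.exp u))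
        ((m * Real.exp u * (1 - m + m * Real.exp u) -
          m * Real.exp u * (m * Real.exp u)) / (1 - m + m * Real.exp u) ^ 2) u :=
      ((Real.hasDerivAt_exp u).const_mul m).div (hvd u) (hv u).ne'
    have h4 : HasDerivAt (fun u : ℝ => m + u / 4) (0 + 1/4) u :=
      (hasDerivAt_const u m).add ((hasDerivAt_id u).div_const 4 |>.congr_deriv (by norm_num))
    exact h4.sub hq
  have hEnonneg : ∀ u, 0 ≤ (0 + 1/4) - (m * Real.exp u * (1 - m + m * Real.exp u) -
        m * Real.exp u * (m * Real.exp u)) / (1 - m + m * Real.exp u) ^ 2 := by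
    intro u
    have hv2 : (0:ℝ) < (1 - m + m * Real.exp u) ^ 2 := pow_pos (hv u) 2
    have key : (m * Real.exp u * (1 - m + m * Real.exp u) -
        m * Real.exp u * (m * Real.exp u)) / (1 - m + m * Real.exp u) ^ 2 ≤ 1/4 := by
      rw [div_le_iff₀ hv2]
      nlinarith [sq_nonneg (1 - m - m * Real.exp u)]
    linarith
  have hEmono : Monotone E := by
    apply monotone_of_deriv_nonneg (fun u => (hE' u).differentiableAt)
    intro u; rw [(hE' u).deriv]; exact hEnonneg u
  have hE0 : E 0 = 0 := by simp [hEdef]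
  have hD0 : D 0 = 0 := by simp [hDdef]
  have hDcont : Continuous D := by
    have : Differentiable ℝ D := fun u => (hD' u).differentiableAt
    exact this.continuous
  have key : 0 ≤ D t := by
    rcases le_or_gt 0 t with ht | ht
    · have hmono : MonotoneOn D (Set.Ici (0:ℝ)) := by
        apply monotoneOn_of_deriv_nonneg (convex_Ici 0) hDcont.continuousOn
          (fun u _ => (hD' u).differentiableAt.differentiableWithinAt)
        intro u hu
        rw [(hD' u).deriv]
        rw [interior_Ici] at hu
        have : (0:ℝ) ≤ u := le_of_lt hu
        calc (0:ℝ) = E 0 := hE0.symm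
          _ ≤ E u := hEmono this
      have := hmono (Set.self_mem_Ici) (Set.mem_Ici.mpr ht) ht
      linarith [hD0 ▸ this]
    · have hanti : AntitoneOn D (Set.Iic (0:ℝ)) := by
        apply antitoneOn_of_deriv_nonpos (convex_Iic 0) hDcont.continuousOn
          (fun u _ => (hD' u).differentiableAt.differentiableWithinAt)
        intro u hu
        rw [(hD' u).deriv]
        rw [interior_Iic] at hu
        have hu0 : u ≤ 0 := le_of_lt hu
        calc E u ≤ E 0 := hEmono hu0
          _ = 0 := hE0
      have := hanti (Set.mem_Iic.mpr ht.le) (Set.self_mem_Iic) ht.le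
      linarith [hD0 ▸ this]
  simp only [hDdef] at key
  linarith

lemma mgf_bound {X : Type*} [MeasurableSpace X] (μ : Measure X) [IsProbabilityMeasure μ]
    (f : X → ℝ) (hf : Measurable f) (h01 : ∀ z, f z ∈ Set.Icc (0:ℝ) 1) (t : ℝ) :
    ∫ z, Real.exp (t * f z) ∂μ ≤ Real.exp (t * (∫ z, f z ∂μ) + t ^ 2 / 8) := by
  have hfint : Integrable f μ := by
    refine (integrable_const (1:ℝ)).mono' hf.aestronglyMeasurable (ae_of_all _ fun z => ?_)
    rw [Real.norm_eq_abs, abs_le]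
    exact ⟨by linarith [(h01 z).1], (h01 z).2⟩
  have hint1 : Integrable (fun z => Real.exp (t * f z)) μ := by
    refine (integrable_const (Real.exp |t|)).mono'
      (Real.measurable_exp.comp (hf.const_mul t)).aestronglyMeasurable
      (ae_of_all _ fun z => ?_)
    rw [Real.norm_eq_abs, abs_of_pos (Real.exp_pos _), Real.exp_le_exp]
    rcases le_or_gt 0 t with h | h
    · calc t * f z ≤ t * 1 := by nlinarith [(h01 z).2]
        _ ≤ |t| := by rw [mul_one]; exact le_abs_self t
    · calc t * f z ≤ t * 0 := by nlinarith [(h01 z).1]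
        _ ≤ |t| := by rw [mul_zero]; positivity
  set m := ∫ z, f z ∂μ with hm
  have hm0 : 0 ≤ m := integral_nonneg fun z => (h01 z).1
  have hm1 : m ≤ 1 := by
    calc m ≤ ∫ _, (1:ℝ) ∂μ := integral_mono hfint (integrable_const 1) fun z => (h01 z).2
      _ = 1 := by simp
  have hint2 : Integrable (fun z => 1 + f z * (Real.exp t - 1)) μ :=
    (integrable_const 1).add (hfint.mul_const _)
  have step1 : ∫ z, Real.exp (t * f z) ∂μ ≤ ∫ z, (1 + f z * (Real.exp t - 1)) ∂μ := by
    refine integral_mono hint1 hint2 fun z => ?_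
    have hy0 := (h01 z).1
    have hy1 := (h01 z).2
    have := convexOn_exp.2 (Set.mem_univ (0:ℝ)) (Set.mem_univ t)
      (by linarith : (0:ℝ) ≤ 1 - f z) hy0 (by ring)
    simp only [smul_eq_mul, mul_zero, zero_add, Real.exp_zero, mul_one] at this
    calc Real.exp (t * f z) = Real.exp (f z * t) := by rw [mul_comm]
      _ ≤ (1 - f z) + f z * Real.exp t := this
      _ = 1 + f z * (Real.exp t - 1) := by ring
  have step2 : ∫ z, (1 + f z * (Real.exp t - 1)) ∂μ = 1 + m * (Real.exp t - 1) := by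
    rw [integral_add (integrable_const 1) (hfint.mul_const _), integral_const,
      integral_mul_const]
    simp
    exact Or.inl hm.symm
  have hpos : 0 < 1 - m + m * Real.exp t := by
    nlinarith [Real.exp_pos t, mul_nonneg (sub_nonneg.2 hm1) (Real.exp_pos t).le,
      mul_nonneg hm0 (Real.exp_pos t).le]
  have step3 : 1 + m * (Real.exp t - 1) ≤ Real.exp (t * m + t ^ 2 / 8) := by
    have h := hoeffding_log_aux m hm0 hm1 t
    calc 1 + m * (Real.exp t - 1) = 1 - m + m * Real.exp t := by ring
      _ = Real.exp (Real.log (1 - m + m * Real.exp t)) := (Real.exp_log hpos).symm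
      _ ≤ Real.exp (m * t + t ^ 2 / 8) := Real.exp_le_exp.2 h
      _ = Real.exp (t * m + t ^ 2 / 8) := by rw [mul_comm m t]
  linarith

lemma chernoff {X : Type*} [MeasurableSpace X] (μ : Measure X) [IsProbabilityMeasure μ]
    (f : X → ℝ) (hf : Measurable f) (h01 : ∀ z, f z ∈ Set.Icc (0:ℝ) 1)
    (n : ℕ) (hn : 0 < n) (s : ℝ) (hs : 0 ≤ s) (c : ℝ) (hc : c ≤ (∫ z, f z ∂μ) - s) :
    (Measure.pi fun _ : Fin n => μ) {x : Fin n → X | (∑ i, f (x i)) / n ≤ c}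
      ≤ ENNReal.ofReal (Real.exp (-2 * n * s ^ 2)) := by
  letI : MeasureSpace X := ⟨μ⟩
  haveI : IsProbabilityMeasure (volume : Measure X) := ‹IsProbabilityMeasure μ›
  have hvol : (Measure.pi fun _ : Fin n => μ) = (volume : Measure (Fin n → X)) := rfl
  set m := ∫ z, f z ∂μ with hm
  set G : (Fin n → X) → ℝ :=
    fun x => Real.exp (4 * s * n * c) * ∏ i, Real.exp (-(4 * s) * f (x i)) with hG
  have hGalt : ∀ x, G x = Real.exp (4 * s * n * c + ∑ i, -(4 * s) * f (x i)) := by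
    intro x
    simp only [hG]
    rw [← Real.exp_sum, ← Real.exp_add]
  have hsm : Measurable fun x : Fin n → X => (∑ i, f (x i)) / (n:ℝ) :=
    (Finset.measurable_sum Finset.univ fun i _ => hf.comp (measurable_pi_apply i)).div_const n
  have hA : MeasurableSet {x : Fin n → X | (∑ i, f (x i)) / n ≤ c} :=
    measurableSet_le hsm measurable_const
  set A := {x : Fin n → X | (∑ i, f (x i)) / n ≤ c} with hAdef
  have hGmeas : Measurable G :=
    (Finset.measurable_prod Finset.univ fun i _ =>
      Real.measurable_exp.comp ((hf.comp (measurable_pi_apply i)).const_mul _)).const_mul _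
  have hGnonneg : ∀ x, 0 ≤ G x := fun x => by
    rw [hGalt]; positivity
  have hGbdd : ∀ x, G x ≤ Real.exp (4 * s * n * c) := by
    intro x
    rw [hGalt, Real.exp_le_exp]
    have : ∑ i, -(4 * s) * f (x i) ≤ 0 := by
      apply Finset.sum_nonpos
      intro i _
      have := (h01 (x i)).1
      nlinarith
    linarith
  have hGint : Integrable G (volume : Measure (Fin n → X)) := by
    refine (integrable_const (Real.exp (4 * s * n * c))).mono' hGmeas.aestronglyMeasurable
      (ae_of_all _ fun x => ?_)
    rw [Real.norm_eq_abs, abs_of_nonneg (hGnonneg x)]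
    exact hGbdd x
  have hind : ∀ x, A.indicator (fun _ => (1:ℝ)) x ≤ G x := by
    intro x
    by_cases hx : x ∈ A
    · rw [Set.indicator_of_mem hx]
      rw [hGalt]
      rw [show (1:ℝ) = Real.exp 0 by simp, Real.exp_le_exp]
      have hxA : (∑ i, f (x i)) / n ≤ c := hx
      have hsum : (∑ i, f (x i)) ≤ n * c := by
        rw [div_le_iff₀ (by positivity : (0:ℝ) < n)] at hxA
        linarith [hxA]
      have : ∑ i, -(4 * s) * f (x i) = -(4*s) * ∑ i, f (x i) := by
        rw [Finset.mul_sum]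
      rw [this]
      nlinarith [hsum]
    · rw [Set.indicator_of_notMem hx]
      exact hGnonneg x
  have key1 : ((volume : Measure (Fin n → X)) A).toReal ≤ ∫ x, G x := by
    have h1 : ∫ x, A.indicator (fun _ => (1:ℝ)) x = ((volume : Measure (Fin n → X)) A).toReal := by
      rw [integral_indicator_const (1:ℝ) hA]; simp; rfl
    rw [← h1]
    exact integral_mono ((integrable_const (1:ℝ)).indicator hA) hGint hind
  have key2 : ∫ x, G x = Real.exp (4 * s * n * c) * (∫ z, Real.exp (-(4 * s) * f z) ∂μ) ^ n := by
    rw [hG]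
    rw [integral_const_mul]
    congr 1
    have := integral_fintype_prod_eq_pow (ι := Fin n) (E := X) (μ := μ) (fun z => Real.exp (-(4 * s) * f z))
    simpa [hvol] using this
  have hmgf : ∫ z, Real.exp (-(4 * s) * f z) ∂μ ≤ Real.exp (-(4*s) * m + (4*s) ^ 2 / 8) :=
    by have := mgf_bound μ f hf h01 (-(4*s)); rwa [neg_sq] at this
  have hexp_nonneg : 0 ≤ ∫ z, Real.exp (-(4 * s) * f z) ∂μ :=
    integral_nonneg fun z => (Real.exp_pos _).le
  have key3 : ((volume : Measure (Fin n → X)) A).toReal ≤ Real.exp (-2 * n * s ^ 2) := by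
    calc ((volume : Measure (Fin n → X)) A).toReal ≤ ∫ x, G x := key1
      _ = Real.exp (4 * s * n * c) * (∫ z, Real.exp (-(4 * s) * f z) ∂μ) ^ n := key2
      _ ≤ Real.exp (4 * s * n * c) * (Real.exp (-(4*s) * m + (4*s) ^ 2 / 8)) ^ n := by
          apply mul_le_mul_of_nonneg_left _ (Real.exp_pos _).le
          exact pow_le_pow_left₀ hexp_nonneg hmgf n
      _ = Real.exp (4 * s * n * c + n * (-(4*s) * m + (4*s) ^ 2 / 8)) := by
          rw [← Real.exp_nat_mul, ← Real.exp_add]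
      _ ≤ Real.exp (-2 * n * s ^ 2) := by
          rw [Real.exp_le_exp]
          have h4 : 4 * s * n * c ≤ 4 * s * n * (m - s) := by
            apply mul_le_mul_of_nonneg_left hc
            positivity
          nlinarith [h4]
  rw [hvol]
  rw [ENNReal.le_ofReal_iff_toReal_le (measure_ne_top _ _) (Real.exp_pos _).le]
  exact key3

end Aux

theorem statement19
    (μ : Measure X) [IsProbabilityMeasure μ]
    (pr : Measure H) [IsProbabilityMeasure pr]
    (ℓ : H → X → ℝ) (hmeas : Measurable (Function.uncurry ℓ))
    (hrange : ∀ h z, ℓ h z ∈ Set.Icc (0 : ℝ) 1)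
    (n : ℕ) (hn : 0 < n) (δ : ℝ) (hδ : 0 < δ) (p : ℕ) :
    ENNReal.ofReal (1 - δ) ≤
      (Measure.pi fun _ : Fin n => μ) {x : Fin n → X | ∀ r : ℝ,
        r + Real.sqrt (Real.log ((1 + (n : ℝ) ^ (2 * p + 1)) / δ) / (2 * n)) <
            essInf (trueLoss ℓ μ) pr →
          phiHat ℓ pr n r x ≤
            ((n : ℝ) ^ p)⁻¹ *
              Real.sqrt (Real.log ((1 + (n : ℝ) ^ (2 * p + 1)) / δ) / (2 * n))} := by
  by_cases hδ1 : 1 ≤ δ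
  · rw [ENNReal.ofReal_eq_zero.2 (by linarith)]
    exact zero_le
  push_neg at hδ1
  have hn1 : (1 : ℝ) ≤ (n : ℝ) := by exact_mod_cast hn
  set N : ℝ := (n : ℝ) ^ (2 * p + 1) with hNdef
  have hN1 : (1 : ℝ) ≤ N := one_le_pow₀ hn1
  set s : ℝ := Real.sqrt (Real.log ((1 + N) / δ) / (2 * n)) with hsdef
  set Lmin : ℝ := essInf (trueLoss ℓ μ) pr with hLmindef
  set b : ℝ := ((n : ℝ) ^ p)⁻¹ * s with hbdef
  set μn : Measure (Fin n → X) := Measure.pi fun _ : Fin n => μ with hμn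
  -- numeric facts
  have hKpos : (0 : ℝ) < (1 + N) / δ := by positivity
  have hK_ge : (1 : ℝ) + N ≤ (1 + N) / δ := by
    rw [le_div_iff₀ hδ]
    nlinarith
  have hlogN : N / (1 + N) ≤ Real.log (1 + N) := by
    have h1 : Real.log (1 + N)⁻¹ ≤ (1 + N)⁻¹ - 1 :=
      Real.log_le_sub_one_of_pos (by positivity)
    rw [Real.log_inv] at h1
    have h2 : 1 - (1 + N)⁻¹ ≤ Real.log (1 + N) := by linarith
    have h3 : N / (1 + N) = 1 - (1 + N)⁻¹ := by
      field_simp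
      ring
    linarith [h3 ▸ h2]
  have hlogK : Real.log (1 + N) ≤ Real.log ((1 + N) / δ) :=
    Real.log_le_log (by positivity) hK_ge
  have hlogKpos : 0 < Real.log ((1 + N) / δ) := by
    have : (1:ℝ) < 1 + N := by linarith
    calc (0:ℝ) < Real.log (1 + N) := Real.log_pos this
      _ ≤ _ := hlogK
  have hargpos : 0 < Real.log ((1 + N) / δ) / (2 * n) := by positivity
  have hs_pos : 0 < s := Real.sqrt_pos.2 hargpos
  have hs_sq : s ^ 2 = Real.log ((1 + N) / δ) / (2 * n) := Real.sq_sqrt hargpos.le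
  have hexp_val : Real.exp (-2 * n * s ^ 2) = δ / (1 + N) := by
    rw [hs_sq]
    have hne : (2 * (n:ℝ)) ≠ 0 := by positivity
    have : -2 * (n:ℝ) * (Real.log ((1 + N) / δ) / (2 * n)) = -Real.log ((1 + N) / δ) := by
      field_simp
    rw [this, Real.exp_neg, Real.exp_log hKpos, inv_div]
  have hnp_pos : (0:ℝ) < (n:ℝ) ^ p := by positivity
  have hb_pos : 0 < b := by positivity
  -- s ≥ n^p / (1+N)
  have hq : N = (n:ℝ) ^ (2 * p) * n := by
    rw [hNdef, pow_succ]
  have hq2 : ((n:ℝ) ^ p) ^ 2 = (n:ℝ) ^ (2 * p) := by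
    rw [← pow_mul, mul_comm]
  have hNlog : N ≤ Real.log ((1 + N) / δ) * (1 + N) := by
    have := hlogN.trans hlogK
    rw [div_le_iff₀ (by positivity : (0:ℝ) < 1 + N)] at this
    linarith
  have hsq_ge : ((n:ℝ) ^ p / (1 + N)) ^ 2 ≤ Real.log ((1 + N) / δ) / (2 * n) := by
    rw [div_pow, hq2, div_le_div_iff₀ (by positivity) (by positivity)]
    nlinarith [mul_le_mul_of_nonneg_right hNlog (by positivity : (0:ℝ) ≤ 1 + N),
      hlogKpos.le, hq, hN1, hn1, sq_nonneg ((n:ℝ)^(2*p))]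
  have hs_ge : (n:ℝ) ^ p / (1 + N) ≤ s := by
    rw [hsdef]
    calc (n:ℝ) ^ p / (1 + N) = Real.sqrt (((n:ℝ) ^ p / (1 + N)) ^ 2) :=
          (Real.sqrt_sq (by positivity)).symm
      _ ≤ _ := Real.sqrt_le_sqrt hsq_ge
  have hb_ge : (1 + N)⁻¹ ≤ b := by
    have h1 : ((n:ℝ) ^ p)⁻¹ * ((n:ℝ) ^ p / (1 + N)) ≤ b := by
      rw [hbdef]
      exact mul_le_mul_of_nonneg_left hs_ge (by positivity)
    have h2 : ((n:ℝ) ^ p)⁻¹ * ((n:ℝ) ^ p / (1 + N)) = (1 + N)⁻¹ := by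
      field_simp
    linarith [h2 ▸ h1]
  have hfinal : Real.exp (-2 * n * s ^ 2) / b ≤ δ := by
    rw [hexp_val, div_le_iff₀ hb_pos]
    calc δ / (1 + N) = δ * (1 + N)⁻¹ := by rw [div_eq_mul_inv]
      _ ≤ δ * b := mul_le_mul_of_nonneg_left hb_ge hδ.le
  -- measure-theoretic part
  set c : ℝ := Lmin - s with hcdef
  set T : Set ((Fin n → X) × H) := {q | empLoss ℓ n q.2 q.1 ≤ c} with hTdef
  have hTmeas : MeasurableSet T := by
    have hm : Measurable fun q : (Fin n → X) × H => empLoss ℓ n q.2 q.1 := by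
      simp only [empLoss]
      exact (Finset.measurable_sum Finset.univ fun i _ =>
        hmeas.comp (measurable_snd.prodMk
          ((measurable_pi_apply i).comp measurable_fst))).div_const _
    exact measurableSet_le hm measurable_const
  set F : (Fin n → X) → ENNReal := fun x => pr {g | empLoss ℓ n g x ≤ c} with hFdef
  have hFmeas : Measurable F := measurable_measure_prodMk_left hTmeas
  have hbdd : Filter.IsBoundedUnder (· ≥ ·) (ae pr) (trueLoss ℓ μ) :=
    Filter.isBoundedUnder_of ⟨0, fun g => integral_nonneg fun z => (hrange g z).1⟩
  have hae : ∀ᵐ g ∂pr, Lmin ≤ trueLoss ℓ μ g := ae_essInf_le hbdd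
  have hlint : ∫⁻ x, F x ∂μn ≤ ENNReal.ofReal (Real.exp (-2 * n * s ^ 2)) := by
    calc ∫⁻ x, F x ∂μn = (μn.prod pr) T := (Measure.prod_apply hTmeas).symm
      _ = ∫⁻ g, μn ((fun x => (x, g)) ⁻¹' T) ∂pr := Measure.prod_apply_symm hTmeas
      _ ≤ ∫⁻ _, ENNReal.ofReal (Real.exp (-2 * n * s ^ 2)) ∂pr := by
          apply lintegral_mono_ae
          filter_upwards [hae] with g hg
          have hc : c ≤ (∫ z, ℓ g z ∂μ) - s := by
            have : trueLoss ℓ μ g = ∫ z, ℓ g z ∂μ := rfl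
            rw [hcdef]
            linarith [this ▸ hg]
          exact chernoff μ (fun z => ℓ g z) (hmeas.comp measurable_prodMk_left)
            (hrange g) n hn s hs_pos.le c hc
      _ = ENNReal.ofReal (Real.exp (-2 * n * s ^ 2)) := by
          simp
  -- Markov
  have hmark : μn {x | ENNReal.ofReal b ≤ F x} ≤ ENNReal.ofReal δ := by
    have h1 := mul_meas_ge_le_lintegral₀ (μ := μn) hFmeas.aemeasurable (ENNReal.ofReal b)
    have hb0 : ENNReal.ofReal b ≠ 0 := by
      simp [ENNReal.ofReal_eq_zero, not_le, hb_pos]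
    have h2 : μn {x | ENNReal.ofReal b ≤ F x} ≤
        ENNReal.ofReal (Real.exp (-2 * n * s ^ 2)) / ENNReal.ofReal b := by
      rw [ENNReal.le_div_iff_mul_le (Or.inl hb0) (Or.inl ENNReal.ofReal_ne_top)]
      calc μn {x | ENNReal.ofReal b ≤ F x} * ENNReal.ofReal b
          = ENNReal.ofReal b * μn {x | ENNReal.ofReal b ≤ F x} := mul_comm _ _
        _ ≤ ∫⁻ x, F x ∂μn := h1
        _ ≤ _ := hlint
    calc μn {x | ENNReal.ofReal b ≤ F x} ≤ _ := h2
      _ = ENNReal.ofReal (Real.exp (-2 * n * s ^ 2) / b) :=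
          (ENNReal.ofReal_div_of_pos hb_pos).symm
      _ ≤ ENNReal.ofReal δ := ENNReal.ofReal_le_ofReal hfinal
  -- event inclusion
  set P : Set (Fin n → X) := {x | ∀ r : ℝ, r + s < Lmin → phiHat ℓ pr n r x ≤ b} with hPdef
  have hincl : Pᶜ ⊆ {x | ENNReal.ofReal b ≤ F x} := by
    intro x hx
    simp only [hPdef, Set.mem_compl_iff, Set.mem_setOf_eq, not_forall] at hx
    obtain ⟨r, hr1, hr2⟩ := hx
    push_neg at hr2
    have hrc : r ≤ c := by rw [hcdef]; linarith
    have hsub : {g | empLoss ℓ n g x ≤ r} ⊆ {g | empLoss ℓ n g x ≤ c} :=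
      fun g hg => le_trans hg hrc
    have h3 : phiHat ℓ pr n r x ≤ (F x).toReal := by
      apply ENNReal.toReal_mono (measure_ne_top pr _)
      exact measure_mono hsub
    have h4 : b ≤ (F x).toReal := le_trans hr2.le h3
    exact Set.mem_setOf_eq ▸ ENNReal.ofReal_le_of_le_toReal h4
  have hPc : μn Pᶜ ≤ ENNReal.ofReal δ := le_trans (measure_mono hincl) hmark
  -- conclude
  have hP : ENNReal.ofReal (1 - δ) ≤ μn P := by
    have hle : ENNReal.ofReal (1 - δ) + μn Pᶜ ≤ μn P + μn Pᶜ := by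
      calc ENNReal.ofReal (1 - δ) + μn Pᶜ ≤ ENNReal.ofReal (1 - δ) + ENNReal.ofReal δ :=
            add_le_add_right hPc _
        _ = ENNReal.ofReal 1 := by
            rw [← ENNReal.ofReal_add (by linarith) hδ.le]; norm_num
        _ = 1 := ENNReal.ofReal_one
        _ = μn Set.univ := measure_univ.symm
        _ ≤ μn P + μn Pᶜ := by
            rw [← Set.union_compl_self P]
            exact measure_union_le P Pᶜ
    exact (ENNReal.add_le_add_iff_right (measure_ne_top μn Pᶜ)).1 hle
  exact hP
end
end
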